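/- arXiv:1306.0495 — 8 statements merged into one kernel-verified Lean document; each statement's English description precedes it below -/
import Mathlib

section
/- The linear map on 2×2 matrices defined by Φ(σ₀) = σ₀ and Φ(σᵢ) = λᵢσᵢ (i=1,2,3) is completely positive if and only if 1 + λ₃ ≥ |λ₁ + λ₂| and 1 − λ₃ ≥ |λ₁ − λ₂| (the Fujiwara–Algoet conditions). -/
open Matrix Kronecker
open scoped ComplexOrder

noncomputable section

def pauli1 : Matrix (Fin 2) (Fin 2) ℂ := !![0, 1; 1, 0]
def pauli2 : Matrix (Fin 2) (Fin 2) ℂ := !![0, -Complex.I; Complex.I, 0]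
def pauli3 : Matrix (Fin 2) (Fin 2) ℂ := !![1, 0; 0, -1]

/-- The Choi matrix `C_Φ = (Φ ⊗ I)(|Bell⟩⟨Bell|) = (1/2) ∑_{i,j} Φ(E_{ij}) ⊗ E_{ij}`. -/
def choiMatrix (f : Matrix (Fin 2) (Fin 2) ℂ → Matrix (Fin 2) (Fin 2) ℂ) :
    Matrix (Fin 2 × Fin 2) (Fin 2 × Fin 2) ℂ :=
  (1 / 2 : ℂ) • ∑ i : Fin 2, ∑ j : Fin 2,
    (f (Matrix.single i j 1)) ⊗ₖ (Matrix.single i j 1)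

lemma choi_apply (f : Matrix (Fin 2) (Fin 2) ℂ → Matrix (Fin 2) (Fin 2) ℂ)
    (a b c d : Fin 2) :
    choiMatrix f (a, b) (c, d) = (1/2 : ℂ) * f (Matrix.single b d 1) a c := by
  fin_cases b <;> fin_cases d <;>
    simp [choiMatrix, Matrix.sum_apply, Matrix.kroneckerMap_apply, Matrix.single,
      Matrix.of_apply, mul_comm]

section values
variable (Φ : Matrix (Fin 2) (Fin 2) ℂ →ₗ[ℂ] Matrix (Fin 2) (Fin 2) ℂ) (l₁ l₂ l₃ : ℝ)

lemma phi00 (h0 : Φ 1 = 1) (h3 : Φ pauli3 = (l₃ : ℂ) • pauli3) :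
    Φ (Matrix.single 0 0 1) = !![(1+(l₃:ℂ))/2, 0; 0, (1-(l₃:ℂ))/2] := by
  have hE : (Matrix.single 0 0 1 : Matrix (Fin 2) (Fin 2) ℂ)
      = (2:ℂ)⁻¹ • (1 + pauli3) := by
    ext i j
    fin_cases i <;> fin_cases j <;>
      simp [pauli3, Matrix.single, Matrix.one_apply] <;> norm_num
  rw [hE, _root_.map_smul, map_add, h0, h3]
  ext i j
  fin_cases i <;> fin_cases j <;> simp [pauli3, Matrix.one_apply] <;> ring

lemma phi11 (h0 : Φ 1 = 1) (h3 : Φ pauli3 = (l₃ : ℂ) • pauli3) :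
    Φ (Matrix.single 1 1 1) = !![(1-(l₃:ℂ))/2, 0; 0, (1+(l₃:ℂ))/2] := by
  have hE : (Matrix.single 1 1 1 : Matrix (Fin 2) (Fin 2) ℂ)
      = (2:ℂ)⁻¹ • (1 - pauli3) := by
    ext i j
    fin_cases i <;> fin_cases j <;>
      simp [pauli3, Matrix.single, Matrix.one_apply] <;> norm_num
  rw [hE, _root_.map_smul, map_sub, h0, h3]
  ext i j
  fin_cases i <;> fin_cases j <;> simp [pauli3, Matrix.one_apply] <;> ring

lemma phi01 (h1 : Φ pauli1 = (l₁ : ℂ) • pauli1) (h2 : Φ pauli2 = (l₂ : ℂ) • pauli2) :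
    Φ (Matrix.single 0 1 1) = !![0, ((l₁:ℂ)+l₂)/2; ((l₁:ℂ)-l₂)/2, 0] := by
  have hE : (Matrix.single 0 1 1 : Matrix (Fin 2) (Fin 2) ℂ)
      = (2:ℂ)⁻¹ • (pauli1 + Complex.I • pauli2) := by
    ext i j
    fin_cases i <;> fin_cases j <;>
      simp [pauli1, pauli2, Matrix.single] <;> norm_num [Complex.ext_iff]
  rw [hE, _root_.map_smul, map_add, _root_.map_smul, h1, h2]
  ext i j
  fin_cases i <;> fin_cases j <;> simp [pauli1, pauli2] <;> ring_nf <;>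
    simp [Complex.ext_iff] <;> ring

lemma phi10 (h1 : Φ pauli1 = (l₁ : ℂ) • pauli1) (h2 : Φ pauli2 = (l₂ : ℂ) • pauli2) :
    Φ (Matrix.single 1 0 1) = !![0, ((l₁:ℂ)-l₂)/2; ((l₁:ℂ)+l₂)/2, 0] := by
  have hE : (Matrix.single 1 0 1 : Matrix (Fin 2) (Fin 2) ℂ)
      = (2:ℂ)⁻¹ • (pauli1 - Complex.I • pauli2) := by
    ext i j
    fin_cases i <;> fin_cases j <;>
      simp [pauli1, pauli2, Matrix.single] <;> norm_num [Complex.ext_iff]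
  rw [hE, _root_.map_smul, map_sub, _root_.map_smul, h1, h2]
  ext i j
  fin_cases i <;> fin_cases j <;> simp [pauli1, pauli2] <;> ring_nf <;>
    simp [Complex.ext_iff] <;> ring

lemma qform
    (p00 : Φ (Matrix.single 0 0 1) = !![(1+(l₃:ℂ))/2, 0; 0, (1-(l₃:ℂ))/2])
    (p11 : Φ (Matrix.single 1 1 1) = !![(1-(l₃:ℂ))/2, 0; 0, (1+(l₃:ℂ))/2])
    (p01 : Φ (Matrix.single 0 1 1) = !![0, ((l₁:ℂ)+l₂)/2; ((l₁:ℂ)-l₂)/2, 0])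
    (p10 : Φ (Matrix.single 1 0 1) = !![0, ((l₁:ℂ)-l₂)/2; ((l₁:ℂ)+l₂)/2, 0])
    (x : Fin 2 × Fin 2 → ℂ) :
    star x ⬝ᵥ (choiMatrix Φ) *ᵥ x =
      (1/4 : ℂ) * ( (1+(l₃:ℂ)) * (star (x (0,0)) * x (0,0) + star (x (1,1)) * x (1,1))
        + ((l₁:ℂ)+l₂) * (star (x (0,0)) * x (1,1) + star (x (1,1)) * x (0,0))
        + (1-(l₃:ℂ)) * (star (x (0,1)) * x (0,1) + star (x (1,0)) * x (1,0))
        + ((l₁:ℂ)-l₂) * (star (x (0,1)) * x (1,0) + star (x (1,0)) * x (0,1)) ) := by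
  simp only [dotProduct, Matrix.mulVec, Fintype.sum_prod_type, Fin.sum_univ_two,
    Pi.star_apply, choi_apply, p00, p01, p10, p11]
  simp [Matrix.cons_val_zero, Matrix.cons_val_one]
  ring

lemma herm
    (p00 : Φ (Matrix.single 0 0 1) = !![(1+(l₃:ℂ))/2, 0; 0, (1-(l₃:ℂ))/2])
    (p11 : Φ (Matrix.single 1 1 1) = !![(1-(l₃:ℂ))/2, 0; 0, (1+(l₃:ℂ))/2])
    (p01 : Φ (Matrix.single 0 1 1) = !![0, ((l₁:ℂ)+l₂)/2; ((l₁:ℂ)-l₂)/2, 0])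
    (p10 : Φ (Matrix.single 1 0 1) = !![0, ((l₁:ℂ)-l₂)/2; ((l₁:ℂ)+l₂)/2, 0]) :
    (choiMatrix Φ).IsHermitian := by
  ext ⟨a, b⟩ ⟨c, d⟩
  rw [Matrix.conjTranspose_apply, choi_apply, choi_apply]
  fin_cases a <;> fin_cases b <;> fin_cases c <;> fin_cases d <;>
    simp [p00, p01, p10, p11, Complex.ext_iff]

end values

/-- Positivity of the elementary hermitian form. -/
lemma key (t s : ℝ) (h : |s| ≤ t) (a d : ℂ) :
    (0:ℂ) ≤ (t:ℂ) * (star a * a + star d * d) + (s:ℂ) * (star a * d + star d * a) := by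
  obtain ⟨hl, hr⟩ := abs_le.mp h
  rw [Complex.le_def]
  constructor
  · simp only [Complex.zero_re, Complex.add_re, Complex.mul_re, Complex.mul_im,
      Complex.add_im, Complex.ofReal_re, Complex.ofReal_im, RCLike.star_def,
      Complex.conj_re, Complex.conj_im]
    nlinarith [mul_nonneg (by linarith : (0:ℝ) ≤ t - s) (sq_nonneg (a.re - d.re)),
      mul_nonneg (by linarith : (0:ℝ) ≤ t + s) (sq_nonneg (a.re + d.re)),
      mul_nonneg (by linarith : (0:ℝ) ≤ t - s) (sq_nonneg (a.im - d.im)),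
      mul_nonneg (by linarith : (0:ℝ) ≤ t + s) (sq_nonneg (a.im + d.im))]
  · simp only [Complex.zero_im, Complex.add_im, Complex.mul_re, Complex.mul_im,
      Complex.add_re, Complex.ofReal_re, Complex.ofReal_im, RCLike.star_def,
      Complex.conj_re, Complex.conj_im]
    ring


/-- Fujiwara–Algoet: the linear map determined by `σ₀ ↦ σ₀`, `σᵢ ↦ λᵢσᵢ` is completely
positive (i.e. its Choi matrix is positive semidefinite) iff
`1 + λ₃ ≥ |λ₁ + λ₂|` and `1 - λ₃ ≥ |λ₁ - λ₂|`. -/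
theorem fujiwara_algoet (Φ : Matrix (Fin 2) (Fin 2) ℂ →ₗ[ℂ] Matrix (Fin 2) (Fin 2) ℂ)
    (l₁ l₂ l₃ : ℝ)
    (h0 : Φ 1 = 1)
    (h1 : Φ pauli1 = (l₁ : ℂ) • pauli1)
    (h2 : Φ pauli2 = (l₂ : ℂ) • pauli2)
    (h3 : Φ pauli3 = (l₃ : ℂ) • pauli3) :
    (choiMatrix Φ).PosSemidef ↔ (|l₁ + l₂| ≤ 1 + l₃ ∧ |l₁ - l₂| ≤ 1 - l₃) := by
  have p00 := phi00 Φ l₃ h0 h3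
  have p11 := phi11 Φ l₃ h0 h3
  have p01 := phi01 Φ l₁ l₂ h1 h2
  have p10 := phi10 Φ l₁ l₂ h1 h2
  have Q := qform Φ l₁ l₂ l₃ p00 p11 p01 p10
  constructor
  · intro hP
    have get1 : ∀ s : ℝ, s = 1 ∨ s = -1 →
        (0:ℝ) ≤ (1 + l₃) * 2 + (l₁ + l₂) * (2 * s) := by
      intro s hs
      have h := hP.dotProduct_mulVec_nonneg (fun p => if p = ((0:Fin 2), (0:Fin 2)) then 1
        else if p = ((1:Fin 2), (1:Fin 2)) then (s:ℂ) else 0)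
      rw [Q] at h
      simp only [Prod.mk.injEq] at h
      norm_num at h
      rw [Complex.le_def] at h
      have hre := h.1
      simp only [Complex.zero_re, Complex.mul_re, Complex.mul_im, Complex.add_re,
        Complex.add_im, Complex.sub_re, Complex.sub_im, Complex.one_re, Complex.one_im,
        Complex.ofReal_re, Complex.ofReal_im, RCLike.star_def, Complex.conj_re,
        Complex.conj_im] at hre
      rcases hs with rfl | rfl <;> norm_num at hre <;> linarith
    have get2 : ∀ s : ℝ, s = 1 ∨ s = -1 →
        (0:ℝ) ≤ (1 - l₃) * 2 + (l₁ - l₂) * (2 * s) := by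
      intro s hs
      have h := hP.dotProduct_mulVec_nonneg (fun p => if p = ((0:Fin 2), (1:Fin 2)) then 1
        else if p = ((1:Fin 2), (0:Fin 2)) then (s:ℂ) else 0)
      rw [Q] at h
      simp only [Prod.mk.injEq] at h
      norm_num at h
      rw [Complex.le_def] at h
      have hre := h.1
      simp only [Complex.zero_re, Complex.mul_re, Complex.mul_im, Complex.add_re,
        Complex.add_im, Complex.sub_re, Complex.sub_im, Complex.one_re, Complex.one_im,
        Complex.ofReal_re, Complex.ofReal_im, RCLike.star_def, Complex.conj_re,
        Complex.conj_im] at hre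
      rcases hs with rfl | rfl <;> norm_num at hre <;> linarith
    refine ⟨abs_le.mpr ⟨?_, ?_⟩, abs_le.mpr ⟨?_, ?_⟩⟩
    · have := get1 1 (Or.inl rfl); linarith
    · have := get1 (-1) (Or.inr rfl); linarith
    · have := get2 1 (Or.inl rfl); linarith
    · have := get2 (-1) (Or.inr rfl); linarith
  · rintro ⟨hA, hB⟩
    refine Matrix.PosSemidef.of_dotProduct_mulVec_nonneg (herm Φ l₁ l₂ l₃ p00 p11 p01 p10) fun x => ?_
    rw [Q]
    have k1 := key (1 + l₃) (l₁ + l₂) hA (x (0,0)) (x (1,1))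
    have k2 := key (1 - l₃) (l₁ - l₂) hB (x (0,1)) (x (1,0))
    have h4 : (0:ℂ) ≤ (1/4 : ℂ) := by
      rw [Complex.le_def]; norm_num
    push_cast at k1 k2 ⊢
    calc (0:ℂ) ≤ (1/4 : ℂ) * (((1 + (l₃:ℂ)) * (star (x (0,0)) * x (0,0) + star (x (1,1)) * x (1,1))
          + ((l₁:ℂ) + l₂) * (star (x (0,0)) * x (1,1) + star (x (1,1)) * x (0,0)))
          + ((1 - (l₃:ℂ)) * (star (x (0,1)) * x (0,1) + star (x (1,0)) * x (1,0))
          + ((l₁:ℂ) - l₂) * (star (x (0,1)) * x (1,0) + star (x (1,0)) * x (0,1)))) :=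
        mul_nonneg h4 (add_nonneg k1 k2)
      _ = _ := by ring

end
end

section
/- The conditions 1 + λ₃ ≥ |λ₁ + λ₂| and 1 − λ₃ ≥ |λ₁ − λ₂| hold if and only if the point (λ₁, λ₂, λ₃) ∈ ℝ³ lies in the convex hull of the four points V₁ = (1,1,1), V₂ = (1,−1,−1), V₃ = (−1,1,−1), V₄ = (−1,−1,1). -/
/-- The Fujiwara–Algoet conditions `1 + λ₃ ≥ |λ₁ + λ₂|` and `1 - λ₃ ≥ |λ₁ - λ₂|` hold
iff `(λ₁, λ₂, λ₃)` lies in the convex hull of the tetrahedron vertices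
`(1,1,1)`, `(1,-1,-1)`, `(-1,1,-1)`, `(-1,-1,1)`. -/
theorem FAC_iff_mem_tetrahedron (l₁ l₂ l₃ : ℝ) :
    (|l₁ + l₂| ≤ 1 + l₃ ∧ |l₁ - l₂| ≤ 1 - l₃) ↔
    ![l₁, l₂, l₃] ∈ convexHull ℝ
      ({![1, 1, 1], ![1, -1, -1], ![-1, 1, -1], ![-1, -1, 1]} : Set (Fin 3 → ℝ)) := by
  set S : Set (Fin 3 → ℝ) := {![1, 1, 1], ![1, -1, -1], ![-1, 1, -1], ![-1, -1, 1]} with hS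
  constructor
  · rintro ⟨h1, h2⟩
    rw [abs_le] at h1 h2
    set w : Fin 4 → ℝ := ![(1 + l₁ + l₂ + l₃)/4, (1 + l₁ - l₂ - l₃)/4,
        (1 - l₁ + l₂ - l₃)/4, (1 - l₁ - l₂ + l₃)/4] with hw
    set z : Fin 4 → (Fin 3 → ℝ) := ![![1, 1, 1], ![1, -1, -1], ![-1, 1, -1], ![-1, -1, 1]]
      with hz
    have hmem : ∑ i, w i • z i ∈ convexHull ℝ S := by
      refine (convex_convexHull ℝ S).sum_mem ?_ ?_ ?_
      · intro i _
        fin_cases i <;> simp [hw] <;> linarith [h1.1, h1.2, h2.1, h2.2]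
      · simp [hw, Fin.sum_univ_four]; ring
      · intro i _
        apply subset_convexHull
        fin_cases i <;> simp [hz, hS]
    have heq : ∑ i, w i • z i = ![l₁, l₂, l₃] := by
      simp [hw, hz, Fin.sum_univ_four, Matrix.smul_cons, Matrix.smul_empty, Matrix.add_cons,
        Matrix.head_cons, Matrix.tail_cons, Matrix.empty_add_empty]
      ring_nf
      simp only [and_self]
    rw [← heq]; exact hmem
  · intro h
    have hC : ![l₁, l₂, l₃] ∈
        {x : Fin 3 → ℝ | |x 0 + x 1| ≤ 1 + x 2 ∧ |x 0 - x 1| ≤ 1 - x 2} := by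
      refine convexHull_min ?_ ?_ h
      · rintro x (rfl | rfl | rfl | rfl) <;> norm_num [Matrix.cons_val_two, Matrix.head_cons, Matrix.tail_cons]
      · rintro x ⟨hx1, hx2⟩ y ⟨hy1, hy2⟩ a b ha hb hab
        rw [abs_le] at hx1 hx2 hy1 hy2
        have e0 : (a • x + b • y) 0 = a * x 0 + b * y 0 := rfl
        have e1 : (a • x + b • y) 1 = a * x 1 + b * y 1 := rfl
        have e2 : (a • x + b • y) 2 = a * x 2 + b * y 2 := rfl
        simp only [Set.mem_setOf_eq, abs_le, e0, e1, e2]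
        constructor <;> constructor <;>
          nlinarith [hx1.1, hx1.2, hx2.1, hx2.2, hy1.1, hy1.2, hy2.1, hy2.2]
    simpa using hC
end

section
/- If Φ_PF(1/2) = Φ₂ ∘ Φ₁ is a decomposition of the 1/2-phase-flip channel into two qubit channels, then at least one of Φ₁, Φ₂ is unitarily equivalent to Φ_PF(1/2); i.e., one of the corresponding 3×3 Bloch matrices has signed singular values (0,0,1) up to sign and permutation. -/
open Matrix

/-- Fujiwara–Algoet conditions on a triple of signed singular values. -/
def FAC (l : Fin 3 → ℝ) : Prop :=
  |l 0 + l 1| ≤ 1 + l 2 ∧ |l 0 - l 1| ≤ 1 - l 2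

/-- A vector has signed singular values `(0,0,1)` up to sign and permutation. -/
def isHalfPhaseFlipSpectrum (l : Fin 3 → ℝ) : Prop :=
  ∃ σ : Equiv.Perm (Fin 3), ∀ j, |l (σ j)| = ![0, 0, 1] j

private lemma dot_mulVec_self (A : Matrix (Fin 3) (Fin 3) ℝ) (h : star A * A = 1)
    (x : Fin 3 → ℝ) : A.mulVec x ⬝ᵥ A.mulVec x = x ⬝ᵥ x := by
  rw [Matrix.dotProduct_mulVec]
  rw [show A.vecMul (A.mulVec x) = (star A * A).mulVec x from ?_, h, one_mulVec]
  rw [Matrix.star_eq_conjTranspose, conjTranspose_eq_transpose_of_trivial, ← mulVec_transpose]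
  rw [mulVec_mulVec]

private lemma FAC_sq_le (a : Fin 3 → ℝ) (ha : FAC a) : ∀ i, a i ^ 2 ≤ 1 := by
  obtain ⟨h1, h2⟩ := ha
  rw [abs_le] at h1 h2
  intro i
  have hc : i = 0 ∨ i = 1 ∨ i = 2 := by omega
  rcases hc with rfl | rfl | rfl
  · nlinarith [mul_nonneg (show (0:ℝ) ≤ 1 - a 0 by linarith [h1.1, h1.2, h2.1, h2.2])
      (show (0:ℝ) ≤ 1 + a 0 by linarith [h1.1, h1.2, h2.1, h2.2])]
  · nlinarith [mul_nonneg (show (0:ℝ) ≤ 1 - a 1 by linarith [h1.1, h1.2, h2.1, h2.2])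
      (show (0:ℝ) ≤ 1 + a 1 by linarith [h1.1, h1.2, h2.1, h2.2])]
  · nlinarith [mul_nonneg (show (0:ℝ) ≤ 1 - a 2 by linarith [h1.1, h1.2, h2.1, h2.2])
      (show (0:ℝ) ≤ 1 + a 2 by linarith [h1.1, h1.2, h2.1, h2.2])]

private lemma exists_sq_one (c x : Fin 3 → ℝ) (hc : ∀ i, c i ^ 2 ≤ 1)
    (hx : x 0 ^ 2 + x 1 ^ 2 + x 2 ^ 2 ≤ 1)
    (h1 : (c 0 * x 0) ^ 2 + (c 1 * x 1) ^ 2 + (c 2 * x 2) ^ 2 = 1) :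
    ∃ i, c i ^ 2 = 1 := by
  by_contra h
  push_neg at h
  have h0 : c 0 ^ 2 < 1 := lt_of_le_of_ne (hc 0) (h 0)
  have h1' : c 1 ^ 2 < 1 := lt_of_le_of_ne (hc 1) (h 1)
  have h2' : c 2 ^ 2 < 1 := lt_of_le_of_ne (hc 2) (h 2)
  set M := max (c 0 ^ 2) (max (c 1 ^ 2) (c 2 ^ 2)) with hM
  have hM0 : c 0 ^ 2 ≤ M := le_max_left _ _
  have hM1 : c 1 ^ 2 ≤ M := le_trans (le_max_left _ _) (le_max_right _ _)
  have hM2 : c 2 ^ 2 ≤ M := le_trans (le_max_right _ _) (le_max_right _ _)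
  have hMlt : M < 1 := max_lt h0 (max_lt h1' h2')
  have hMnn : 0 ≤ M := le_trans (sq_nonneg _) hM0
  nlinarith [mul_nonneg (sub_nonneg.2 hM0) (sq_nonneg (x 0)),
    mul_nonneg (sub_nonneg.2 hM1) (sq_nonneg (x 1)),
    mul_nonneg (sub_nonneg.2 hM2) (sq_nonneg (x 2)),
    mul_nonneg hMnn (sub_nonneg.2 hx)]

private lemma spec_of (a : Fin 3 → ℝ) (hFAC : FAC a) (hone : ∃ i, a i ^ 2 = 1)
    (hzero : ∃ j, a j = 0) : isHalfPhaseFlipSpectrum a := by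
  obtain ⟨h1, h2⟩ := hFAC
  rw [abs_le] at h1 h2
  have habs : ∀ x : ℝ, x ^ 2 = 1 → |x| = 1 := by
    intro x hx
    have h2x : (x - 1) * (x + 1) = 0 := by nlinarith
    rcases mul_eq_zero.mp h2x with h3 | h3
    · rw [show x = 1 by linarith]; norm_num
    · rw [show x = -1 by linarith]; norm_num
  have key : (|a 0| = 1 ∧ a 1 = 0 ∧ a 2 = 0) ∨ (a 0 = 0 ∧ |a 1| = 1 ∧ a 2 = 0) ∨
      (a 0 = 0 ∧ a 1 = 0 ∧ |a 2| = 1) := by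
    obtain ⟨i, hi⟩ := hone
    obtain ⟨j, hj⟩ := hzero
    have hsign : ∀ x : ℝ, x ^ 2 = 1 → x = 1 ∨ x = -1 := by
      intro x hx
      have h2x : (x - 1) * (x + 1) = 0 := by nlinarith
      rcases mul_eq_zero.mp h2x with h3 | h3
      · exact Or.inl (by linarith)
      · exact Or.inr (by linarith)
    have hic : i = 0 ∨ i = 1 ∨ i = 2 := by omega
    have hjc : j = 0 ∨ j = 1 ∨ j = 2 := by omega
    rcases hic with rfl | rfl | rfl <;> rcases hjc with rfl | rfl | rfl
    · exfalso; rw [hj] at hi; norm_num at hi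
    · -- a 0 ^ 2 = 1, a 1 = 0 ⇒ a 2 = 0
      refine Or.inl ⟨habs _ hi, hj, ?_⟩
      rcases hsign _ hi with h | h <;> rw [h] at h1 h2 <;> rw [hj] at h1 h2 <;>
        [linarith [h1.1, h1.2, h2.1, h2.2]; linarith [h1.1, h1.2, h2.1, h2.2]]
    · -- a 0 ^ 2 = 1, a 2 = 0 ⇒ a 1 = 0
      refine Or.inl ⟨habs _ hi, ?_, hj⟩
      rcases hsign _ hi with h | h <;> rw [h] at h1 h2 <;> rw [hj] at h1 h2 <;>
        [linarith [h1.1, h1.2, h2.1, h2.2]; linarith [h1.1, h1.2, h2.1, h2.2]]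
    · -- a 1 ^ 2 = 1, a 0 = 0 ⇒ a 2 = 0
      refine Or.inr (Or.inl ⟨hj, habs _ hi, ?_⟩)
      rcases hsign _ hi with h | h <;> rw [h] at h1 h2 <;> rw [hj] at h1 h2 <;>
        [linarith [h1.1, h1.2, h2.1, h2.2]; linarith [h1.1, h1.2, h2.1, h2.2]]
    · exfalso; rw [hj] at hi; norm_num at hi
    · -- a 1 ^ 2 = 1, a 2 = 0 ⇒ a 0 = 0
      refine Or.inr (Or.inl ⟨?_, habs _ hi, hj⟩)
      rcases hsign _ hi with h | h <;> rw [h] at h1 h2 <;> rw [hj] at h1 h2 <;>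
        [linarith [h1.1, h1.2, h2.1, h2.2]; linarith [h1.1, h1.2, h2.1, h2.2]]
    · -- a 2 ^ 2 = 1, a 0 = 0 ⇒ a 1 = 0
      refine Or.inr (Or.inr ⟨hj, ?_, habs _ hi⟩)
      rcases hsign _ hi with h | h <;> rw [h] at h1 h2 <;> rw [hj] at h1 h2 <;>
        [linarith [h1.1, h1.2, h2.1, h2.2]; linarith [h1.1, h1.2, h2.1, h2.2]]
    · -- a 2 ^ 2 = 1, a 1 = 0 ⇒ a 0 = 0
      refine Or.inr (Or.inr ⟨?_, hj, habs _ hi⟩)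
      rcases hsign _ hi with h | h <;> rw [h] at h1 h2 <;> rw [hj] at h1 h2 <;>
        [linarith [h1.1, h1.2, h2.1, h2.2]; linarith [h1.1, h1.2, h2.1, h2.2]]
    · exfalso; rw [hj] at hi; norm_num at hi
  rcases key with ⟨k1, k2, k3⟩ | ⟨k1, k2, k3⟩ | ⟨k1, k2, k3⟩
  · refine ⟨Equiv.swap 0 2, ?_⟩
    intro j
    fin_cases j <;> simp [Equiv.swap_apply_def, k1, k2, k3]
  · refine ⟨Equiv.swap 1 2, ?_⟩
    intro j
    fin_cases j <;> simp [Equiv.swap_apply_def, k1, k2, k3]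
  · refine ⟨1, ?_⟩
    intro j
    fin_cases j <;> simp [k1, k2, k3]

/-- If `Φ_PF(1/2) = Φ₂ ∘ Φ₁`, i.e. the Bloch matrices of two qubit channels
(written in signed singular value decomposition with values satisfying the
Fujiwara–Algoet conditions) compose to `diag(0,0,1)`, then at least one of the
two channels has signed singular values `(0,0,1)` up to sign and permutation,
i.e. is unitarily equivalent to `Φ_PF(1/2)`. -/
theorem halfPhaseFlip_indecomposable
    (M₁ M₂ : Matrix (Fin 3) (Fin 3) ℝ) (a b : Fin 3 → ℝ)
    (R₁ S₁ R₂ S₂ : Matrix (Fin 3) (Fin 3) ℝ)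
    (hR₁ : R₁ ∈ Matrix.specialOrthogonalGroup (Fin 3) ℝ)
    (hS₁ : S₁ ∈ Matrix.specialOrthogonalGroup (Fin 3) ℝ)
    (hR₂ : R₂ ∈ Matrix.specialOrthogonalGroup (Fin 3) ℝ)
    (hS₂ : S₂ ∈ Matrix.specialOrthogonalGroup (Fin 3) ℝ)
    (h₁ : M₁ = R₁ * Matrix.diagonal a * S₁)
    (h₂ : M₂ = R₂ * Matrix.diagonal b * S₂)
    (ha : FAC a) (hb : FAC b)
    (hcomp : M₂ * M₁ = Matrix.diagonal ![0, 0, 1]) :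
    isHalfPhaseFlipSpectrum a ∨ isHalfPhaseFlipSpectrum b := by
  rw [Matrix.mem_specialOrthogonalGroup_iff, Matrix.mem_orthogonalGroup_iff'] at hR₁ hS₁ hR₂ hS₂
  have haSq := FAC_sq_le a ha
  have hbSq := FAC_sq_le b hb
  -- determinant argument: some entry of `a` or of `b` vanishes
  have hdet : (a 0 * a 1 * a 2) * (b 0 * b 1 * b 2) = 0 := by
    have := congrArg Matrix.det hcomp
    rw [Matrix.det_mul, h₁, h₂] at this
    simp only [Matrix.det_mul, hR₁.2, hS₁.2, hR₂.2, hS₂.2, Matrix.det_diagonal,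
      Fin.prod_univ_three] at this
    simp only [Matrix.cons_val_zero, Matrix.cons_val_one, Matrix.head_cons,
      Matrix.cons_val_two, Matrix.tail_cons] at this
    nlinarith [this]
  -- norm argument: both `a` and `b` have an entry of square one
  set v : Fin 3 → ℝ := ![0, 0, 1] with hv
  set u : Fin 3 → ℝ := S₁.mulVec v with hu
  set w : Fin 3 → ℝ := M₁.mulVec v with hw
  set y : Fin 3 → ℝ := S₂.mulVec w with hy
  have hvv : v ⬝ᵥ v = 1 := by simp [hv, dotProduct, Fin.sum_univ_three]
  have huu : u 0 ^ 2 + u 1 ^ 2 + u 2 ^ 2 = 1 := by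
    have := dot_mulVec_self S₁ hS₁.1 v
    rw [← hu, hvv] at this
    simpa [dotProduct, Fin.sum_univ_three, sq] using this
  have hwda : w = R₁.mulVec ((Matrix.diagonal a).mulVec u) := by
    rw [hw, h₁, hu, mulVec_mulVec, mulVec_mulVec]
  have hww : w ⬝ᵥ w = (a 0 * u 0) ^ 2 + (a 1 * u 1) ^ 2 + (a 2 * u 2) ^ 2 := by
    rw [hwda, dot_mulVec_self R₁ hR₁.1]
    simp [dotProduct, Fin.sum_univ_three, mulVec_diagonal, sq]
  have hMw : M₂.mulVec w = v := by
    rw [hw, mulVec_mulVec, hcomp]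
    funext i
    rw [mulVec_diagonal]
    fin_cases i <;> simp [hv]
  have hMwv : (R₂.mulVec ((Matrix.diagonal b).mulVec y)) = v := by
    rw [← hMw, hy, h₂, mulVec_mulVec, mulVec_mulVec]
  have hby : (b 0 * y 0) ^ 2 + (b 1 * y 1) ^ 2 + (b 2 * y 2) ^ 2 = 1 := by
    have := dot_mulVec_self R₂ hR₂.1 ((Matrix.diagonal b).mulVec y)
    rw [hMwv, hvv] at this
    simpa [dotProduct, Fin.sum_univ_three, mulVec_diagonal, sq] using this.symm
  have hyy : y ⬝ᵥ y = w ⬝ᵥ w := by rw [hy, dot_mulVec_self S₂ hS₂.1]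
  have hyy' : y 0 ^ 2 + y 1 ^ 2 + y 2 ^ 2 =
      (a 0 * u 0) ^ 2 + (a 1 * u 1) ^ 2 + (a 2 * u 2) ^ 2 := by
    have := hyy
    rw [hww] at this
    simpa [dotProduct, Fin.sum_univ_three, sq] using this
  -- ∑ (a i u i)² ≤ 1
  have hNa_le : (a 0 * u 0) ^ 2 + (a 1 * u 1) ^ 2 + (a 2 * u 2) ^ 2 ≤ 1 := by
    nlinarith [mul_nonneg (sub_nonneg.2 (haSq 0)) (sq_nonneg (u 0)),
      mul_nonneg (sub_nonneg.2 (haSq 1)) (sq_nonneg (u 1)),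
      mul_nonneg (sub_nonneg.2 (haSq 2)) (sq_nonneg (u 2))]
  -- 1 = ∑ (b i y i)² ≤ ∑ y i²
  have hy_ge : 1 ≤ y 0 ^ 2 + y 1 ^ 2 + y 2 ^ 2 := by
    nlinarith [mul_nonneg (sub_nonneg.2 (hbSq 0)) (sq_nonneg (y 0)),
      mul_nonneg (sub_nonneg.2 (hbSq 1)) (sq_nonneg (y 1)),
      mul_nonneg (sub_nonneg.2 (hbSq 2)) (sq_nonneg (y 2))]
  have hy_eq : y 0 ^ 2 + y 1 ^ 2 + y 2 ^ 2 = 1 := le_antisymm (by linarith [hyy', hNa_le]) hy_ge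
  have hNa_eq : (a 0 * u 0) ^ 2 + (a 1 * u 1) ^ 2 + (a 2 * u 2) ^ 2 = 1 := by linarith [hyy']
  have haOne : ∃ i, a i ^ 2 = 1 := exists_sq_one a u haSq (le_of_eq huu) hNa_eq
  have hbOne : ∃ i, b i ^ 2 = 1 := exists_sq_one b y hbSq (le_of_eq hy_eq) hby
  -- combine
  rcases mul_eq_zero.mp hdet with h | h
  · left
    refine spec_of a ha haOne ?_
    rcases mul_eq_zero.mp h with h' | h'
    · rcases mul_eq_zero.mp h' with h'' | h''
      · exact ⟨0, h''⟩
      · exact ⟨1, h''⟩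
    · exact ⟨2, h'⟩
  · right
    refine spec_of b hb hbOne ?_
    rcases mul_eq_zero.mp h with h' | h'
    · rcases mul_eq_zero.mp h' with h'' | h''
      · exact ⟨0, h''⟩
      · exact ⟨1, h''⟩
    · exact ⟨2, h'⟩
end

section
/- Let r = 1 − λ₁² − λ₂² − λ₃² + 2(λ₁²u₁² + λ₂²u₂² + λ₃²u₃²) for a unit vector (u₁,u₂,u₃), and q = (1+λ₁+λ₂+λ₃)(1+λ₁−λ₂−λ₃)(1−λ₁+λ₂−λ₃)(1−λ₁−λ₂+λ₃). If (λ₁,λ₂,λ₃) satisfies the Fujiwara–Algoet conditions, then r² − q ≥ 0. -/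
set_option maxHeartbeats 1000000 in
lemma disc_aux (r m q : ℝ) (hm0 : 0 ≤ m) (hmr : m ≤ r) (hq : q ≤ m ^ 2) :
    0 ≤ r ^ 2 - q := by nlinarith

set_option maxHeartbeats 1000000 in
/-- If `(λ₁,λ₂,λ₃)` satisfies the Fujiwara–Algoet conditions and `(u₁,u₂,u₃)` is a unit
vector, then with `r = 1 - ∑λᵢ² + 2∑λᵢ²uᵢ²` and `q = 256 q₀q₁q₂q₃` one has `r² - q ≥ 0`. -/
theorem discriminant_nonneg (l₁ l₂ l₃ u₁ u₂ u₃ : ℝ)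
    (hu : u₁ ^ 2 + u₂ ^ 2 + u₃ ^ 2 = 1)
    (hFAC : |l₁ + l₂| ≤ 1 + l₃ ∧ |l₁ - l₂| ≤ 1 - l₃) :
    0 ≤ (1 - l₁ ^ 2 - l₂ ^ 2 - l₃ ^ 2 +
          2 * (l₁ ^ 2 * u₁ ^ 2 + l₂ ^ 2 * u₂ ^ 2 + l₃ ^ 2 * u₃ ^ 2)) ^ 2 -
        (1 + l₁ + l₂ + l₃) * (1 + l₁ - l₂ - l₃) * (1 - l₁ + l₂ - l₃) *
          (1 - l₁ - l₂ + l₃) := by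
  obtain ⟨h1, h2⟩ := hFAC
  rw [abs_le] at h1 h2
  obtain ⟨h1a, h1b⟩ := h1
  obtain ⟨h2a, h2b⟩ := h2
  have q0 : (0:ℝ) ≤ 1 + l₁ + l₂ + l₃ := by linarith
  have q1 : (0:ℝ) ≤ 1 + l₁ - l₂ - l₃ := by linarith
  have q2 : (0:ℝ) ≤ 1 - l₁ + l₂ - l₃ := by linarith
  have q3 : (0:ℝ) ≤ 1 - l₁ - l₂ + l₃ := by linarith
  set r1 : ℝ := 1 + l₁ ^ 2 - l₂ ^ 2 - l₃ ^ 2 with hr1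
  set r2 : ℝ := 1 - l₁ ^ 2 + l₂ ^ 2 - l₃ ^ 2 with hr2
  set r3 : ℝ := 1 - l₁ ^ 2 - l₂ ^ 2 + l₃ ^ 2 with hr3
  set q : ℝ := (1 + l₁ + l₂ + l₃) * (1 + l₁ - l₂ - l₃) * (1 - l₁ + l₂ - l₃) *
      (1 - l₁ - l₂ + l₃) with hq
  have hr1n : 0 ≤ r1 := by nlinarith [mul_nonneg q0 q1, mul_nonneg q2 q3]
  have hr2n : 0 ≤ r2 := by nlinarith [mul_nonneg q0 q2, mul_nonneg q1 q3]
  have hr3n : 0 ≤ r3 := by nlinarith [mul_nonneg q0 q3, mul_nonneg q1 q2]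
  have id1 : r1 ^ 2 - q = 4 * (l₂ * l₃ - l₁) ^ 2 := by rw [hr1, hq]; ring
  have id2 : r2 ^ 2 - q = 4 * (l₁ * l₃ - l₂) ^ 2 := by rw [hr2, hq]; ring
  have id3 : r3 ^ 2 - q = 4 * (l₁ * l₂ - l₃) ^ 2 := by rw [hr3, hq]; ring
  have hq1 : q ≤ r1 ^ 2 := by linarith [sq_nonneg (l₂ * l₃ - l₁)]
  have hq2 : q ≤ r2 ^ 2 := by linarith [sq_nonneg (l₁ * l₃ - l₂)]
  have hq3 : q ≤ r3 ^ 2 := by linarith [sq_nonneg (l₁ * l₂ - l₃)]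
  set r : ℝ := 1 - l₁ ^ 2 - l₂ ^ 2 - l₃ ^ 2 +
      2 * (l₁ ^ 2 * u₁ ^ 2 + l₂ ^ 2 * u₂ ^ 2 + l₃ ^ 2 * u₃ ^ 2) with hr
  have hrc : r = u₁ ^ 2 * r1 + u₂ ^ 2 * r2 + u₃ ^ 2 * r3 := by
    rw [hr, hr1, hr2, hr3]; linear_combination -(1 - l₁ ^ 2 - l₂ ^ 2 - l₃ ^ 2) * hu
  rcases le_total r1 r2 with h12 | h12
  · rcases le_total r1 r3 with h13 | h13
    · refine disc_aux r r1 q hr1n ?_ hq1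
      rw [hrc]
      nlinarith [mul_nonneg (sq_nonneg u₂) (sub_nonneg.2 h12),
        mul_nonneg (sq_nonneg u₃) (sub_nonneg.2 h13)]
    · refine disc_aux r r3 q hr3n ?_ hq3
      rw [hrc]
      nlinarith [mul_nonneg (sq_nonneg u₂) (sub_nonneg.2 (h13.trans h12)),
        mul_nonneg (sq_nonneg u₁) (sub_nonneg.2 h13)]
  · rcases le_total r2 r3 with h23 | h23
    · refine disc_aux r r2 q hr2n ?_ hq2
      rw [hrc]
      nlinarith [mul_nonneg (sq_nonneg u₁) (sub_nonneg.2 h12),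
        mul_nonneg (sq_nonneg u₃) (sub_nonneg.2 h23)]
    · refine disc_aux r r3 q hr3n ?_ hq3
      rw [hrc]
      nlinarith [mul_nonneg (sq_nonneg u₁) (sub_nonneg.2 (h23.trans h12)),
        mul_nonneg (sq_nonneg u₂) (sub_nonneg.2 h23)]
end

section
/- Suppose |λ₃| ≤ 1 and λ₃ has the smallest absolute value among λ₁,λ₂,λ₃, and set r_min = 1 − λ₁² − λ₂² + λ₃², q = 256 q₀q₁q₂q₃ ≥ 0, and b₀ = 1 − λ₁² − λ₂² − λ₃² + 2λ₁λ₂λ₃. Then r_min − √(r_min² − q) ≤ b₀ ≤ r_min + √(r_min² − q). -/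
/-- With `λ₃` of smallest absolute value, `|λ₃| ≤ 1`, `r_min = 1 - λ₁² - λ₂² + λ₃²`,
`q = 256 q₀q₁q₂q₃ ≥ 0` and `b₀ = 1 - λ₁² - λ₂² - λ₃² + 2λ₁λ₂λ₃`, one has
`r_min - √(r_min² - q) ≤ b₀ ≤ r_min + √(r_min² - q)`. -/
theorem b0_between_roots (l₁ l₂ l₃ : ℝ)
    (h3 : |l₃| ≤ 1) (h31 : |l₃| ≤ |l₁|) (h32 : |l₃| ≤ |l₂|)
    (hq : 0 ≤ 256 * ((1 + l₁ + l₂ + l₃) / 4) * ((1 + l₁ - l₂ - l₃) / 4) *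
        ((1 - l₁ + l₂ - l₃) / 4) * ((1 - l₁ - l₂ + l₃) / 4)) :
    (let rmin := 1 - l₁ ^ 2 - l₂ ^ 2 + l₃ ^ 2
     let q := 256 * ((1 + l₁ + l₂ + l₃) / 4) * ((1 + l₁ - l₂ - l₃) / 4) *
        ((1 - l₁ + l₂ - l₃) / 4) * ((1 - l₁ - l₂ + l₃) / 4)
     let b₀ := 1 - l₁ ^ 2 - l₂ ^ 2 - l₃ ^ 2 + 2 * l₁ * l₂ * l₃
     rmin - Real.sqrt (rmin ^ 2 - q) ≤ b₀ ∧ b₀ ≤ rmin + Real.sqrt (rmin ^ 2 - q)) := by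
  simp only
  have key : (1 - l₁ ^ 2 - l₂ ^ 2 + l₃ ^ 2) ^ 2 -
      256 * ((1 + l₁ + l₂ + l₃) / 4) * ((1 + l₁ - l₂ - l₃) / 4) *
        ((1 - l₁ + l₂ - l₃) / 4) * ((1 - l₁ - l₂ + l₃) / 4) =
      (2 * (l₁ * l₂ - l₃)) ^ 2 := by ring
  rw [key, Real.sqrt_sq_eq_abs]
  have habs : |l₃ * (2 * (l₁ * l₂ - l₃))| ≤ |2 * (l₁ * l₂ - l₃)| := by
    rw [abs_mul]
    exact mul_le_of_le_one_left (abs_nonneg _) h3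
  obtain ⟨hlo, hhi⟩ := abs_le.mp habs
  constructor <;> nlinarith
end

section
/- Let C be a circle in ℝ² and E an ellipse contained inside the closed disc bounded by C. If C ∩ E contains three distinct points, then E = C. -/
noncomputable section
open Metric
abbrev V2 := EuclideanSpace ℝ (Fin 2)
def Jv (u : V2) : V2 := !₂[-u 1, u 0]

lemma norm_coords {u : V2} (hu : ‖u‖ = 1) : u 0 ^ 2 + u 1 ^ 2 = 1 := by
  have h := real_inner_self_eq_norm_sq u
  rw [hu] at h
  simp only [PiLp.inner_apply, Fin.sum_univ_two, RCLike.inner_apply, conj_trivial, one_pow] at h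
  nlinarith [h]

lemma Jv_apply0 (u : V2) : Jv u 0 = -u 1 := rfl
lemma Jv_apply1 (u : V2) : Jv u 1 = u 0 := rfl

lemma inner_coords (u v : V2) : (inner ℝ u v : ℝ) = u 0 * v 0 + u 1 * v 1 := by
  simp [PiLp.inner_apply, Fin.sum_univ_two]; ring

lemma decomp_basis {w : V2} (hw : ‖w‖ = 1) (u : V2) :
    u = (inner ℝ u w : ℝ) • w + (inner ℝ u (Jv w) : ℝ) • Jv w := by
  have hw2 := norm_coords hw
  ext i
  fin_cases i
  · simp [inner_coords, Jv_apply0, Jv_apply1, PiLp.add_apply, PiLp.smul_apply]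
    linear_combination (-u 0) * hw2
  · simp [inner_coords, Jv_apply0, Jv_apply1, PiLp.add_apply, PiLp.smul_apply]
    linear_combination (-u 1) * hw2

lemma sum_sq_coords {w u : V2} (hw : ‖w‖ = 1) (hu : ‖u‖ = 1) :
    (inner ℝ u w : ℝ) ^ 2 + (inner ℝ u (Jv w) : ℝ) ^ 2 = 1 := by
  have hw2 := norm_coords hw
  have hu2 := norm_coords hu
  simp [inner_coords, Jv_apply0, Jv_apply1]
  nlinarith [hw2, hu2]

lemma norm_Jv' (u : V2) : ‖Jv u‖ = ‖u‖ := by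
  simp [EuclideanSpace.norm_eq, Fin.sum_univ_two, Jv]; ring_nf

lemma inner_w_Jv (w : V2) : (inner ℝ w (Jv w) : ℝ) = 0 := by
  simp [inner_coords, Jv_apply0, Jv_apply1]; ring

open Polynomial in
lemma poly_deg4_nonneg_three_roots (P : Polynomial ℝ) (hdeg : P.natDegree ≤ 4)
    (hpos : ∀ s : ℝ, 0 ≤ P.eval s) {x y z : ℝ} (hxy : x ≠ y) (hyz : y ≠ z) (hxz : x ≠ z)
    (hx : P.eval x = 0) (hy : P.eval y = 0) (hz : P.eval z = 0) : P = 0 := by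
  by_contra hP
  have key : ∀ t : ℝ, P.eval t = 0 → 2 ≤ P.roots.count t := by
    intro t ht
    classical
    rw [Polynomial.count_roots]
    rw [show (2:ℕ) = 1 + 1 from rfl, Nat.add_one_le_iff,
      Polynomial.one_lt_rootMultiplicity_iff_isRoot hP]
    refine ⟨ht, ?_⟩
    have hmin : IsLocalMin (fun s => P.eval s) t := by
      apply IsMinOn.isLocalMin (s := Set.univ)
      · intro s _
        simpa [ht] using hpos s
      · exact Filter.univ_mem
    have := hmin.deriv_eq_zero
    rwa [Polynomial.deriv] at this
  have hle : (2 • {x} + 2 • {y} + 2 • {z} : Multiset ℝ) ≤ P.roots := by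
    classical
    rw [Multiset.le_iff_count]
    intro a
    simp only [Multiset.count_add, Multiset.count_nsmul, Multiset.count_singleton]
    by_cases hax : a = x
    · subst hax
      rw [if_pos rfl, if_neg hxy, if_neg hxz]
      simpa using key a hx
    · by_cases hay : a = y
      · subst hay
        rw [if_neg (Ne.symm hxy), if_pos rfl, if_neg hyz]
        simpa using key a hy
      · by_cases haz : a = z
        · subst haz
          rw [if_neg (Ne.symm hxz), if_neg (Ne.symm hyz), if_pos rfl]
          simpa using key a hz
        · rw [if_neg (Ne.symm hax ∘ Eq.symm), if_neg, if_neg] <;> simp [hax, hay, haz]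
  have hcard := Multiset.card_le_card hle
  simp at hcard
  have := (Polynomial.card_roots' P).trans hdeg
  omega

lemma alg0 (s : ℝ) : (2*s/(1+s^2)) / (1 + (1-s^2)/(1+s^2)) = s := by
  have hs : (1:ℝ)+s^2 ≠ 0 := by positivity
  rw [div_eq_iff]
  · field_simp
    ring
  · intro h
    field_simp at h
    linarith

lemma alg1 {a b : ℝ} (hab : a^2+b^2 = 1) (ha : 0 < 1+a) :
    (1-(b/(1+a))^2)/(1+(b/(1+a))^2) = a := by
  have h1 : (1+a) ≠ 0 := ha.ne'
  have h2 : 1 + (b/(1+a))^2 = 2/(1+a) := by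
    field_simp
    linear_combination hab
  have h3 : 1-(b/(1+a))^2 = 2*a/(1+a) := by
    field_simp
    linear_combination (-1)*hab
  rw [h2, h3]
  field_simp

lemma alg2 {a b : ℝ} (hab : a^2+b^2 = 1) (ha : 0 < 1+a) :
    2*(b/(1+a))/(1+(b/(1+a))^2) = b := by
  have h1 : (1+a) ≠ 0 := ha.ne'
  have h2 : 1 + (b/(1+a))^2 = 2/(1+a) := by
    field_simp
    linear_combination hab
  rw [h2]
  field_simp

open Polynomial in
lemma chart_core {k p1 p2 q1 q2 q3 ρ : ℝ} {g' : ℝ → ℝ}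
    (hexp : ∀ s : ℝ, g' s * (1+s^2)^2
      = k*(1+s^2)^2 + 2*ρ*(1+s^2)*((1-s^2)*p1+2*s*p2)
        + ρ^2*((1-s^2)^2*q1+4*s*(1-s^2)*q3+4*s^2*q2))
    (hnn : ∀ s : ℝ, 0 ≤ g' s)
    {s1 s2 s3 : ℝ} (d12 : s1 ≠ s2) (d23 : s2 ≠ s3) (d13 : s1 ≠ s3)
    (z1 : g' s1 = 0) (z2 : g' s2 = 0) (z3 : g' s3 = 0) :
    ∀ s : ℝ, g' s = 0 := by
  set P : ℝ[X] := C (k + 2*ρ*p1 + ρ^2*q1) + C (4*ρ*p2 + 4*ρ^2*q3) * X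
      + C (2*k - 2*ρ^2*q1 + 4*ρ^2*q2) * X^2 + C (4*ρ*p2 - 4*ρ^2*q3) * X^3
      + C (k - 2*ρ*p1 + ρ^2*q1) * X^4 with hP
  have hspos : ∀ s : ℝ, (0:ℝ) < (1+s^2)^2 := fun s => by positivity
  have heval : ∀ s : ℝ, P.eval s = g' s * (1+s^2)^2 := by
    intro s
    rw [hexp s, hP]
    simp only [eval_add, eval_mul, eval_pow, eval_C, eval_X]
    ring
  have hdeg : P.natDegree ≤ 4 := by
    rw [hP]
    compute_degree
  have hz : P = 0 := by
    refine poly_deg4_nonneg_three_roots P hdeg ?_ d12 d23 d13 ?_ ?_ ?_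
    · intro s
      rw [heval]
      exact mul_nonneg (hnn s) (hspos s).le
    · rw [heval, z1, zero_mul]
    · rw [heval, z2, zero_mul]
    · rw [heval, z3, zero_mul]
  intro s
  have h := heval s
  rw [hz] at h
  simp only [eval_zero] at h
  have := (hspos s).ne'
  exact by
    rcases mul_eq_zero.mp h.symm with h' | h'
    · exact h'
    · exact absurd h' this

lemma norm_expand {F : Type*} [NormedAddCommGroup F] [InnerProductSpace ℝ F]
    (m α β : F) (r t : ℝ) :
    ‖m + r • α + t • β‖^2 = ‖m‖^2 + r^2*‖α‖^2 + t^2*‖β‖^2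
      + 2*r*(inner ℝ m α : ℝ) + 2*t*(inner ℝ m β : ℝ) + 2*r*t*(inner ℝ α β : ℝ) := by
  rw [← real_inner_self_eq_norm_sq, ← real_inner_self_eq_norm_sq,
    ← real_inner_self_eq_norm_sq, ← real_inner_self_eq_norm_sq]
  simp only [inner_add_left, inner_add_right, real_inner_smul_left, real_inner_smul_right,
    real_inner_comm α m, real_inner_comm β m, real_inner_comm β α]
  ring

lemma scalar_expand (K p1 p2 q1 q2 q3 ρ s : ℝ) (hs : (1:ℝ)+s^2 ≠ 0) :
    (K + (ρ*((1-s^2)/(1+s^2)))^2*q1 + (ρ*(2*s/(1+s^2)))^2*q2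
      + 2*(ρ*((1-s^2)/(1+s^2)))*p1 + 2*(ρ*(2*s/(1+s^2)))*p2
      + 2*(ρ*((1-s^2)/(1+s^2)))*(ρ*(2*s/(1+s^2)))*q3 - 1) * (1+s^2)^2
    = (K - 1)*(1+s^2)^2 + 2*ρ*(1+s^2)*((1-s^2)*p1+2*s*p2)
      + ρ^2*((1-s^2)^2*q1+4*s*(1-s^2)*q3+4*s^2*q2) := by
  field_simp
  ring

lemma chart_vanish (T : V2 ≃ₗ[ℝ] V2) (d c : V2) {ρ : ℝ} (hρ : 0 < ρ)
    (hnn : ∀ u : V2, ‖u‖ = 1 → 0 ≤ ‖T (c + ρ • u) + d‖^2 - 1)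
    {w : V2} (hw : ‖w‖ = 1)
    {u₁ u₂ u₃ : V2} (h1 : ‖u₁‖ = 1) (h2 : ‖u₂‖ = 1) (h3 : ‖u₃‖ = 1)
    (h12 : u₁ ≠ u₂) (h23 : u₂ ≠ u₃) (h13 : u₁ ≠ u₃)
    (hw1 : u₁ ≠ -w) (hw2 : u₂ ≠ -w) (hw3 : u₃ ≠ -w)
    (hz1 : ‖T (c + ρ • u₁) + d‖^2 - 1 = 0) (hz2 : ‖T (c + ρ • u₂) + d‖^2 - 1 = 0)
    (hz3 : ‖T (c + ρ • u₃) + d‖^2 - 1 = 0) :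
    ∀ u : V2, ‖u‖ = 1 → u ≠ -w → ‖T (c + ρ • u) + d‖^2 - 1 = 0 := by
  have hnw' : ‖Jv w‖ = 1 := by rw [norm_Jv', hw]
  have how' : (inner ℝ w (Jv w) : ℝ) = 0 := inner_w_Jv w
  have how'' : (inner ℝ (Jv w) w : ℝ) = 0 := by rw [real_inner_comm]; exact how'
  set w' : V2 := Jv w with hw'
  set U : ℝ → V2 := fun s => ((1-s^2)/(1+s^2)) • w + (2*s/(1+s^2)) • w' with hU
  have hspos : ∀ s : ℝ, (0:ℝ) < 1 + s^2 := fun s => by positivity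
  have hUnorm : ∀ s : ℝ, ‖U s‖ = 1 := by
    intro s
    have h := norm_add_sq_real (((1-s^2)/(1+s^2)) • w) ((2*s/(1+s^2)) • w')
    rw [real_inner_smul_left, real_inner_smul_right, how'] at h
    rw [norm_smul, norm_smul, Real.norm_eq_abs, Real.norm_eq_abs, hw, hnw'] at h
    have hval : ‖U s‖^2 = 1 := by
      rw [hU]
      simp only []
      rw [h, mul_one, mul_one, sq_abs, sq_abs]
      have := (hspos s).ne'
      field_simp
      ring
    nlinarith [norm_nonneg (U s), hval]
  -- inversion
  set σ : V2 → ℝ := fun u => (inner ℝ u w' : ℝ)/(1+(inner ℝ u w : ℝ)) with hσ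
  have hUσ : ∀ u : V2, ‖u‖ = 1 → u ≠ -w → U (σ u) = u := by
    intro u hu hne
    obtain ⟨a, ha'⟩ : ∃ a : ℝ, (inner ℝ u w : ℝ) = a := ⟨_, rfl⟩
    obtain ⟨b, hb'⟩ : ∃ b : ℝ, (inner ℝ u w' : ℝ) = b := ⟨_, rfl⟩
    have hab : a^2 + b^2 = 1 := by rw [← ha', ← hb']; exact sum_sq_coords hw hu
    have hdecomp : u = a • w + b • w' := by rw [← ha', ← hb']; exact decomp_basis hw u
    have ha : 0 < 1 + a := by
      have ha1 : -1 ≤ a := by nlinarith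
      rcases ha1.lt_or_eq with h | h
      · linarith
      · exfalso
        apply hne
        have hb2 : b^2 = 0 := by rw [← h] at hab; linarith [hab]
        have hb0 : b = 0 := pow_eq_zero_iff (by norm_num : (2:ℕ) ≠ 0) |>.mp hb2
        rw [hdecomp, ← h, hb0]
        module
    rw [hU, hσ]
    simp only []
    rw [ha', hb', alg1 hab ha, alg2 hab ha, ← hdecomp]
  -- expansion
  have hexp : ∀ s : ℝ, (‖T (c + ρ • U s) + d‖^2 - 1) * (1+s^2)^2
      = (‖T c + d‖^2 - 1)*(1+s^2)^2
        + 2*ρ*(1+s^2)*((1-s^2)*(inner ℝ (T c + d) (T w) : ℝ) + 2*s*(inner ℝ (T c + d) (T w') : ℝ))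
        + ρ^2*((1-s^2)^2*‖T w‖^2 + 4*s*(1-s^2)*(inner ℝ (T w) (T w') : ℝ) + 4*s^2*‖T w'‖^2) := by
    intro s
    have hs := (hspos s).ne'
    have hTv : T (c + ρ • U s) + d
        = (T c + d) + (ρ*((1-s^2)/(1+s^2))) • T w + (ρ*(2*s/(1+s^2))) • T w' := by
      rw [hU]
      simp only []
      rw [smul_add, smul_smul, smul_smul, map_add, map_add, map_smul, map_smul]
      module
    rw [hTv, norm_expand]
    exact scalar_expand _ _ _ _ _ _ _ _ hs
  -- apply chart_core
  have hcore := chart_core hexp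
    (fun s => hnn (U s) (hUnorm s))
    (s1 := σ u₁) (s2 := σ u₂) (s3 := σ u₃)
    (by intro h; apply h12; rw [← hUσ u₁ h1 hw1, ← hUσ u₂ h2 hw2, h])
    (by intro h; apply h23; rw [← hUσ u₂ h2 hw2, ← hUσ u₃ h3 hw3, h])
    (by intro h; apply h13; rw [← hUσ u₁ h1 hw1, ← hUσ u₃ h3 hw3, h])
    (by rw [hUσ u₁ h1 hw1]; exact hz1)
    (by rw [hUσ u₂ h2 hw2]; exact hz2)
    (by rw [hUσ u₃ h3 hw3]; exact hz3)
  intro u hu hne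
  have := hcore (σ u)
  rwa [hUσ u hu hne] at this

lemma inner_Jv (u : V2) : inner ℝ u (Jv u) = (0:ℝ) := by
  simp [PiLp.inner_apply, Fin.sum_univ_two, Jv]; ring

lemma norm_Jv (u : V2) : ‖Jv u‖ = ‖u‖ := by
  simp [EuclideanSpace.norm_eq, Fin.sum_univ_two, Jv]; ring_nf

lemma image_closedBall_subset (f : V2 →ᵃ[ℝ] V2) (c : V2) (ρ : ℝ)
    (hEC : f '' Metric.sphere 0 1 ⊆ Metric.closedBall c ρ) :
    f '' Metric.closedBall 0 1 ⊆ Metric.closedBall c ρ := by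
  rintro _ ⟨u, hu, rfl⟩
  rw [Metric.mem_closedBall, dist_zero_right] at hu
  obtain ⟨e, he1, he2⟩ : ∃ e : V2, ‖e‖ = 1 ∧ inner ℝ u e = (0:ℝ) := by
    rcases eq_or_ne u 0 with h | h
    · refine ⟨!₂[1,0], ?_, by simp [h]⟩
      simp [EuclideanSpace.norm_eq, Fin.sum_univ_two]
    · refine ⟨‖u‖⁻¹ • Jv u, ?_, ?_⟩
      · simp [norm_smul, norm_Jv, norm_ne_zero_iff.mpr h]
      · rw [real_inner_smul_right, inner_Jv]; ring
  set t := Real.sqrt (1 - ‖u‖^2) with htdef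
  have ht2 : t^2 = 1 - ‖u‖^2 := Real.sq_sqrt (by nlinarith [norm_nonneg u])
  have hip : inner ℝ u (t • e) = (0:ℝ) := by rw [real_inner_smul_right, he2]; ring
  have hts : ‖t • e‖^2 = t^2 := by rw [norm_smul]; simp [he1, abs_of_nonneg (Real.sqrt_nonneg _)]
  have h₁ : ‖u + t • e‖ = 1 := by
    have h := norm_add_sq_real u (t • e)
    rw [hip, hts, ht2] at h
    nlinarith [norm_nonneg (u + t • e)]
  have h₂ : ‖u - t • e‖ = 1 := by
    have h := norm_sub_sq_real u (t • e)
    rw [hip, hts, ht2] at h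
    nlinarith [norm_nonneg (u - t • e)]
  have hmid : f u = midpoint ℝ (f (u + t • e)) (f (u - t • e)) := by
    rw [← AffineMap.map_midpoint, midpoint_add_sub]
  rw [hmid]
  refine (convex_closedBall c ρ).segment_subset ?_ ?_ (midpoint_mem_segment _ _)
  · exact hEC ⟨_, by simpa [Metric.mem_sphere, dist_zero_right] using h₁, rfl⟩
  · exact hEC ⟨_, by simpa [Metric.mem_sphere, dist_zero_right] using h₂, rfl⟩

lemma sphere_char (T : V2 ≃ₗ[ℝ] V2) (d c : V2) {ρ : ℝ} (hρ : 0 < ρ)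
    (h0 : ∀ u : V2, ‖u‖ = 1 → ‖T (c + ρ • u) + d‖ = 1) (x : V2) :
    ‖T x + d‖ = 1 ↔ ‖x - c‖ = ρ := by
  set m := T c + d with hm
  have key : ∀ u : V2, ‖u‖ = 1 → ‖m + ρ • T u‖ = 1 := by
    intro u hu
    have h := h0 u hu
    rwa [map_add, map_smul, add_right_comm] at h
  have hfacts : ∀ u : V2, ‖u‖ = 1 →
      (inner ℝ m (T u) = (0:ℝ) ∧ ‖m‖^2 + ρ^2*‖T u‖^2 = 1) := by
    intro u hu
    have h1 := key u hu
    have h2 := key (-u) (by simpa using hu)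
    rw [map_neg, smul_neg, ← sub_eq_add_neg] at h2
    have e1 := norm_add_sq_real m (ρ • T u)
    have e2 := norm_sub_sq_real m (ρ • T u)
    rw [h1] at e1; rw [h2] at e2
    rw [real_inner_smul_right] at e1 e2
    rw [norm_smul, Real.norm_eq_abs, abs_of_pos hρ] at e1 e2
    constructor
    · nlinarith
    · nlinarith
  have hm0 : m = 0 := by
    by_contra hm0
    have hTm : T.symm m ≠ 0 := fun h => hm0 (by simpa using congrArg T h)
    set u := ‖T.symm m‖⁻¹ • T.symm m with hu_def
    have hu : ‖u‖ = 1 := by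
      simp [hu_def, norm_smul, norm_ne_zero_iff.mpr hTm]
    have h := (hfacts u hu).1
    rw [hu_def, map_smul, T.apply_symm_apply, real_inner_smul_right,
      real_inner_self_eq_norm_sq] at h
    have : ‖m‖ = 0 := by
      have hn : (‖T.symm m‖⁻¹ : ℝ) ≠ 0 := inv_ne_zero (norm_ne_zero_iff.mpr hTm)
      have := mul_eq_zero.mp h
      rcases this with h' | h'
      · exact absurd h' hn
      · exact pow_eq_zero_iff (by norm_num) |>.mp h'
    exact hm0 (norm_eq_zero.mp this)
  have hsc : ∀ v : V2, ‖T v‖ = ‖v‖ / ρ := by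
    intro v
    rcases eq_or_ne v 0 with rfl | hv
    · simp
    · set u := ‖v‖⁻¹ • v with hu_def
      have hu : ‖u‖ = 1 := by simp [hu_def, norm_smul, norm_ne_zero_iff.mpr hv]
      have h := (hfacts u hu).2
      rw [hm0] at h
      simp only [norm_zero] at h
      have hTu : ‖T u‖ = 1/ρ := by
        have h1 : (ρ * ‖T u‖)^2 = 1 := by ring_nf; ring_nf at h; linarith
        have h2 : 0 ≤ ρ * ‖T u‖ := by positivity
        have : ρ * ‖T u‖ = 1 := by nlinarith
        field_simp at this ⊢
        linarith
      have hv' : T v = ‖v‖ • T u := by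
        rw [hu_def, map_smul, smul_smul, mul_inv_cancel₀ (norm_ne_zero_iff.mpr hv), one_smul]
      rw [hv', norm_smul, hTu, Real.norm_eq_abs, abs_of_nonneg (norm_nonneg v)]
      ring
  have hd : T x + d = T (x - c) := by
    have : d = -T c := by
      have := hm0
      rw [hm] at this
      linear_combination (norm := module) this
    rw [this, map_sub]; module
  rw [hd, hsc]
  rw [div_eq_one_iff_eq hρ.ne']

def mk2 (a b : ℝ) : V2 := !₂[a, b]
lemma mk2_0 (a b : ℝ) : mk2 a b 0 = a := rfl
lemma mk2_1 (a b : ℝ) : mk2 a b 1 = b := rfl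
lemma V2_ne0 {x y : V2} (h : x 0 ≠ y 0) : x ≠ y := fun he => h (by rw [he])
lemma V2_ne1 {x y : V2} (h : x 1 ≠ y 1) : x ≠ y := fun he => h (by rw [he])
lemma norm_mk2 (a b : ℝ) (h : a^2 + b^2 = 1) : ‖mk2 a b‖ = 1 := by
  rw [EuclideanSpace.norm_eq]
  simp only [Fin.sum_univ_two, mk2_0, mk2_1, Real.norm_eq_abs, sq_abs]
  rw [h]
  exact Real.sqrt_one

lemma exists_two_good (uM uN uO : V2) :
    ∃ p q : V2, p ≠ q ∧ ‖p‖ = 1 ∧ ‖q‖ = 1 ∧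
      (p ≠ uM ∧ p ≠ uN ∧ p ≠ uO) ∧ (q ≠ uM ∧ q ≠ uN ∧ q ≠ uO) := by
  classical
  set v1 := mk2 1 0
  set v2 := mk2 (-1) 0
  set v3 := mk2 0 1
  set v4 := mk2 0 (-1)
  set v5 := mk2 (3/5) (4/5)
  have hnorm : ∀ v ∈ ({v1, v2, v3, v4, v5} : Finset V2), ‖v‖ = 1 := by
    intro v hv
    simp only [Finset.mem_insert, Finset.mem_singleton] at hv
    rcases hv with rfl | rfl | rfl | rfl | rfl <;>
      · apply norm_mk2
        norm_num
  have hcard : ({v1, v2, v3, v4, v5} : Finset V2).card = 5 := by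
    have h12 : v1 ≠ v2 := V2_ne0 (show (1:ℝ) ≠ -1 by norm_num)
    have h13 : v1 ≠ v3 := V2_ne0 (show (1:ℝ) ≠ 0 by norm_num)
    have h14 : v1 ≠ v4 := V2_ne0 (show (1:ℝ) ≠ 0 by norm_num)
    have h15 : v1 ≠ v5 := V2_ne0 (show (1:ℝ) ≠ 3/5 by norm_num)
    have h23 : v2 ≠ v3 := V2_ne0 (show (-1:ℝ) ≠ 0 by norm_num)
    have h24 : v2 ≠ v4 := V2_ne0 (show (-1:ℝ) ≠ 0 by norm_num)
    have h25 : v2 ≠ v5 := V2_ne0 (show (-1:ℝ) ≠ 3/5 by norm_num)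
    have h34 : v3 ≠ v4 := V2_ne1 (show (1:ℝ) ≠ -1 by norm_num)
    have h35 : v3 ≠ v5 := V2_ne1 (show (1:ℝ) ≠ 4/5 by norm_num)
    have h45 : v4 ≠ v5 := V2_ne1 (show (-1:ℝ) ≠ 4/5 by norm_num)
    rw [Finset.card_insert_of_notMem (by simp [h12, h13, h14, h15]),
      Finset.card_insert_of_notMem (by simp [h23, h24, h25]),
      Finset.card_insert_of_notMem (by simp [h34, h35]),
      Finset.card_insert_of_notMem (by simp [h45]),
      Finset.card_singleton]
  have hS : ({uM, uN, uO} : Finset V2).card ≤ 3 := by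
    apply (Finset.card_insert_le _ _).trans
    apply Nat.succ_le_succ
    apply (Finset.card_insert_le _ _).trans
    simp
  have hsd : 1 < (({v1, v2, v3, v4, v5} : Finset V2) \ ({uM, uN, uO} : Finset V2)).card := by
    have := Finset.le_card_sdiff ({uM, uN, uO} : Finset V2) ({v1, v2, v3, v4, v5} : Finset V2)
    omega
  obtain ⟨p, hp, q, hq, hpq⟩ := Finset.one_lt_card.mp hsd
  rw [Finset.mem_sdiff] at hp hq
  refine ⟨p, q, hpq, hnorm p hp.1, hnorm q hq.1, ?_, ?_⟩
  · have := hp.2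
    simp only [Finset.mem_insert, Finset.mem_singleton] at this
    push_neg at this
    exact this
  · have := hq.2
    simp only [Finset.mem_insert, Finset.mem_singleton] at this
    push_neg at this
    exact this

lemma eq_one_of_sq_sub_one {x : ℝ} (h0 : 0 ≤ x) (h : x^2 - 1 = 0) : x = 1 := by nlinarith

/-- If `C` is a circle in `ℝ²` and `E` an ellipse (the image of the unit circle under an
invertible affine map) contained in the closed disc bounded by `C`, and `C ∩ E` contains
three distinct points, then `E = C`. -/
theorem ellipse_eq_circle_of_three_points
    (c : EuclideanSpace ℝ (Fin 2)) (ρ : ℝ) (hρ : 0 < ρ)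
    (f : EuclideanSpace ℝ (Fin 2) →ᵃ[ℝ] EuclideanSpace ℝ (Fin 2))
    (hf : Function.Bijective f)
    (E : Set (EuclideanSpace ℝ (Fin 2))) (hE : E = f '' Metric.sphere 0 1)
    (hEC : E ⊆ Metric.closedBall c ρ)
    (M N O : EuclideanSpace ℝ (Fin 2)) (hMN : M ≠ N) (hNO : N ≠ O) (hMO : M ≠ O)
    (hM : M ∈ Metric.sphere c ρ ∩ E) (hN : N ∈ Metric.sphere c ρ ∩ E)
    (hO : O ∈ Metric.sphere c ρ ∩ E) :
    E = Metric.sphere c ρ := by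
  have hL : Function.Bijective (f.linear : V2 →ₗ[ℝ] V2) := f.linear_bijective_iff.mpr hf
  set A : V2 ≃ₗ[ℝ] V2 := LinearEquiv.ofBijective f.linear hL with hA
  set T : V2 ≃ₗ[ℝ] V2 := A.symm with hT
  set d : V2 := -(A.symm (f 0)) with hd
  have hfx : ∀ x : V2, f x = A x + f 0 := by
    intro x
    have h := congrFun f.decomp x
    rw [hA, LinearEquiv.ofBijective_apply]
    simpa using h
  have hfT : ∀ x : V2, f (T x + d) = x := by
    intro x
    rw [hfx, hT, hd, map_add, A.apply_symm_apply, map_neg, A.apply_symm_apply]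
    abel
  have hTf : ∀ u : V2, T (f u) + d = u := by
    intro u
    rw [hfx, hT, hd, map_add, A.symm_apply_apply]
    abel
  have hmem : ∀ x : V2, x ∈ E ↔ ‖T x + d‖ = 1 := by
    intro x
    rw [hE]
    constructor
    · rintro ⟨u, hu, rfl⟩
      rw [hTf]
      rwa [mem_sphere_zero_iff_norm] at hu
    · intro h
      exact ⟨T x + d, mem_sphere_zero_iff_norm.mpr h, hfT x⟩
  -- nonnegativity on the circle
  have himg : ⇑f '' Metric.closedBall 0 1 ⊆ Metric.closedBall c ρ :=
    image_closedBall_subset f c ρ (hE ▸ hEC)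
  have hopen : IsOpen {x : V2 | ‖T x + d‖ < 1} := by
    have hc : Continuous fun x : V2 => ‖T x + d‖ :=
      (((T : V2 →ₗ[ℝ] V2).continuous_of_finiteDimensional).add continuous_const).norm
    exact isOpen_lt hc continuous_const
  have hsub : {x : V2 | ‖T x + d‖ < 1} ⊆ Metric.ball c ρ := by
    have h1 : {x : V2 | ‖T x + d‖ < 1} ⊆ Metric.closedBall c ρ := fun x hx =>
      himg ⟨T x + d, mem_closedBall_zero_iff.mpr (le_of_lt hx), hfT x⟩
    have h2 := hopen.subset_interior_iff.mpr h1
    rwa [interior_closedBall c hρ.ne'] at h2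
  have hnn : ∀ u : V2, ‖u‖ = 1 → 0 ≤ ‖T (c + ρ • u) + d‖^2 - 1 := by
    intro u hu
    have hxs : c + ρ • u ∉ Metric.ball c ρ := by
      simp only [Metric.mem_ball, dist_self_add_left, not_lt]
      rw [norm_smul, Real.norm_eq_abs, abs_of_pos hρ, hu, mul_one]
    have h1 : ¬ (‖T (c + ρ • u) + d‖ < 1) := fun h => hxs (hsub h)
    push_neg at h1
    nlinarith [h1]
  -- the three unit vectors
  have hMs := hM.1
  have hNs := hN.1
  have hOs := hO.1
  rw [mem_sphere_iff_norm] at hMs hNs hOs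
  set uM : V2 := ρ⁻¹ • (M - c) with huM
  set uN : V2 := ρ⁻¹ • (N - c) with huN
  set uO : V2 := ρ⁻¹ • (O - c) with huO
  have hρ' : ρ ≠ 0 := hρ.ne'
  have hMu : c + ρ • uM = M := by rw [huM, smul_smul, mul_inv_cancel₀ hρ', one_smul]; abel
  have hNu : c + ρ • uN = N := by rw [huN, smul_smul, mul_inv_cancel₀ hρ', one_smul]; abel
  have hOu : c + ρ • uO = O := by rw [huO, smul_smul, mul_inv_cancel₀ hρ', one_smul]; abel
  have hnM : ‖uM‖ = 1 := by
    rw [huM, norm_smul, Real.norm_eq_abs, abs_of_pos (inv_pos.mpr hρ), hMs]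
    field_simp
  have hnN : ‖uN‖ = 1 := by
    rw [huN, norm_smul, Real.norm_eq_abs, abs_of_pos (inv_pos.mpr hρ), hNs]
    field_simp
  have hnO : ‖uO‖ = 1 := by
    rw [huO, norm_smul, Real.norm_eq_abs, abs_of_pos (inv_pos.mpr hρ), hOs]
    field_simp
  have hdMN : uM ≠ uN := fun h => hMN (by rw [← hMu, ← hNu, h])
  have hdNO : uN ≠ uO := fun h => hNO (by rw [← hNu, ← hOu, h])
  have hdMO : uM ≠ uO := fun h => hMO (by rw [← hMu, ← hOu, h])
  have hzM : ‖T (c + ρ • uM) + d‖^2 - 1 = 0 := by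
    rw [hMu]
    have := (hmem M).mp hM.2
    rw [this]; norm_num
  have hzN : ‖T (c + ρ • uN) + d‖^2 - 1 = 0 := by
    rw [hNu]
    have := (hmem N).mp hN.2
    rw [this]; norm_num
  have hzO : ‖T (c + ρ • uO) + d‖^2 - 1 = 0 := by
    rw [hOu]
    have := (hmem O).mp hO.2
    rw [this]; norm_num
  -- choose two charts
  obtain ⟨p, q, hpq, hnp, hnq, ⟨hpM, hpN, hpO⟩, ⟨hqM, hqN, hqO⟩⟩ := exists_two_good uM uN uO
  have hvp : ∀ u : V2, ‖u‖ = 1 → u ≠ p → ‖T (c + ρ • u) + d‖^2 - 1 = 0 := by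
    have h := chart_vanish T d c hρ hnn (w := -p) (by rwa [norm_neg])
      hnM hnN hnO hdMN hdNO hdMO
      (by rw [neg_neg]; exact fun h' => hpM h'.symm)
      (by rw [neg_neg]; exact fun h' => hpN h'.symm)
      (by rw [neg_neg]; exact fun h' => hpO h'.symm)
      hzM hzN hzO
    intro u hu hne
    exact h u hu (by rwa [neg_neg])
  have hvq : ∀ u : V2, ‖u‖ = 1 → u ≠ q → ‖T (c + ρ • u) + d‖^2 - 1 = 0 := by
    have h := chart_vanish T d c hρ hnn (w := -q) (by rwa [norm_neg])
      hnM hnN hnO hdMN hdNO hdMO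
      (by rw [neg_neg]; exact fun h' => hqM h'.symm)
      (by rw [neg_neg]; exact fun h' => hqN h'.symm)
      (by rw [neg_neg]; exact fun h' => hqO h'.symm)
      hzM hzN hzO
    intro u hu hne
    exact h u hu (by rwa [neg_neg])
  have hall : ∀ u : V2, ‖u‖ = 1 → ‖T (c + ρ • u) + d‖ = 1 := by
    intro u hu
    have hz : ‖T (c + ρ • u) + d‖^2 - 1 = 0 := by
      by_cases h : u = p
      · exact hvq u hu (h ▸ hpq)
      · exact hvp u hu h
    exact eq_one_of_sq_sub_one (norm_nonneg _) hz
  have hchar := sphere_char T d c hρ hall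
  ext x
  rw [hmem x, hchar x, mem_sphere_iff_norm]
end
end

section
/- Let S be the unit sphere in ℝ³ and E an ellipsoid contained in the closed unit ball. Then the intersection S ∩ E is either empty, a single point, exactly two points, a circle, or the whole sphere S. -/
set_option maxHeartbeats 1000000
open RealInnerProductSpace

section aux
variable {V : Type*} [NormedAddCommGroup V] [InnerProductSpace ℝ V]


lemma norm_eq_one_of_sq {x : V} (h : ‖x‖^2 = 1) : ‖x‖ = 1 := by
  have h2 : (‖x‖ - 1) * (‖x‖ + 1) = 0 := by nlinarith
  rcases mul_eq_zero.mp h2 with h3 | h3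
  · linarith
  · have := norm_nonneg x; linarith

lemma quad_expand (B : V →ₗ[ℝ] V) (hB : ∀ x y : V, ⟪B x, y⟫ = ⟪x, B y⟫) (b z w : V) (a c : ℝ) :
    ⟪B (a • z + c • w), a • z + c • w⟫ + 2 * ⟪b, a • z + c • w⟫
      = a^2 * ⟪B z, z⟫ + 2*a*c*⟪B z, w⟫ + c^2 * ⟪B w, w⟫ + 2*a*⟪b, z⟫ + 2*c*⟪b, w⟫ := by
  have h1 : ⟪B w, z⟫ = ⟪B z, w⟫ := by rw [hB w z, real_inner_comm]
  simp only [map_add, map_smul, inner_add_left, inner_add_right, real_inner_smul_left,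
    real_inner_smul_right]
  rw [h1]; ring

lemma lagrange_unit (B : V →ₗ[ℝ] V) (hB : ∀ x y : V, ⟪B x, y⟫ = ⟪x, B y⟫) (b : V)
    (hpos : ∀ x : V, ‖x‖ = 1 → 0 ≤ ⟪B x, x⟫ + 2 * ⟪b, x⟫)
    {z : V} (hz : ‖z‖ = 1) (hz0 : ⟪B z, z⟫ + 2 * ⟪b, z⟫ = 0)
    {w : V} (hw : ⟪z, w⟫ = 0) (hwn : ‖w‖ = 1) : ⟪B z, w⟫ + ⟪b, w⟫ = 0 := by
  set p := ⟪B z, z⟫ with hp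
  set β₂ := ⟪B z, w⟫ with hβ₂
  set β₃ := ⟪B w, w⟫ with hβ₃
  set b₁ := ⟪b, z⟫ with hb₁
  set b₂ := ⟪b, w⟫ with hb₂
  have hpb : p + 2*b₁ = 0 := hz0
  set A := 4*β₂ + 4*b₂ with hA
  set Q : ℝ → ℝ := fun u => (p + 2*b₁) + A*u + (-2*p + 4*β₃)*u^2 + (-4*β₂ + 4*b₂)*u^3
      + (p - 2*b₁)*u^4 with hQdef
  have hQ : ∀ u : ℝ, 0 ≤ Q u := by
    intro u
    have hu : (0:ℝ) < 1 + u^2 := by positivity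
    set a : ℝ := (1 - u^2)/(1 + u^2) with ha
    set c : ℝ := (2*u)/(1 + u^2) with hc
    have hxn : ‖a • z + c • w‖ = 1 := by
      apply norm_eq_one_of_sq
      rw [norm_add_sq_real, norm_smul, norm_smul, real_inner_smul_left, real_inner_smul_right,
        hw, hz, hwn]
      simp only [mul_pow, sq_abs, Real.norm_eq_abs]
      rw [ha, hc]
      field_simp
      ring
    have h0 := hpos _ hxn
    have hexp : (1+u^2)^2 * (⟪B (a • z + c • w), a • z + c • w⟫ + 2*⟪b, a • z + c • w⟫)
        = Q u := by
      rw [quad_expand B hB]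
      rw [hQdef, ha, hc, ← hp, ← hβ₂, ← hβ₃, ← hb₁, ← hb₂, hA]
      field_simp
      ring
    have := mul_nonneg (le_of_lt (by positivity : (0:ℝ) < (1+u^2)^2)) h0
    rw [hexp] at this
    exact this
  have hQ0 : Q 0 = 0 := by simp [hQdef]; linarith
  have hmin : IsLocalMin Q 0 := Filter.Eventually.of_forall fun u => hQ0.trans_le (hQ u)
  have hd : HasDerivAt Q A 0 := by
    rw [hQdef]
    have h1 := (hasDerivAt_id (0:ℝ)).const_mul A
    have h2 := (hasDerivAt_pow 2 (0:ℝ)).const_mul (-2*p + 4*β₃)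
    have h3 := (hasDerivAt_pow 3 (0:ℝ)).const_mul (-4*β₂ + 4*b₂)
    have h4 := (hasDerivAt_pow 4 (0:ℝ)).const_mul (p - 2*b₁)
    have h0 := hasDerivAt_const (0:ℝ) (p + 2*b₁)
    have := (((h0.add h1).add h2).add h3).add h4
    exact this.congr_deriv (by norm_num)
  have hA0 : A = 0 := by rw [← hd.deriv]; exact hmin.deriv_eq_zero
  rw [hA] at hA0; linarith

lemma lagrange (B : V →ₗ[ℝ] V) (hB : ∀ x y : V, ⟪B x, y⟫ = ⟪x, B y⟫) (b : V)
    (hpos : ∀ x : V, ‖x‖ = 1 → 0 ≤ ⟪B x, x⟫ + 2 * ⟪b, x⟫)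
    {z : V} (hz : ‖z‖ = 1) (hz0 : ⟪B z, z⟫ + 2 * ⟪b, z⟫ = 0)
    {w : V} (hw : ⟪z, w⟫ = 0) : ⟪B z + b, w⟫ = 0 := by
  rcases eq_or_ne w 0 with rfl | hw0
  · simp
  · have hwn : ‖(‖w‖⁻¹ • w)‖ = 1 := norm_smul_inv_norm hw0
    have h := lagrange_unit B hB b hpos hz hz0 (w := ‖w‖⁻¹ • w)
      (by rw [real_inner_smul_right, hw, mul_zero]) hwn
    rw [real_inner_smul_right, real_inner_smul_right] at h
    have hc : (‖w‖:ℝ)⁻¹ ≠ 0 := inv_ne_zero (norm_ne_zero_iff.mpr hw0)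
    rw [inner_add_left]
    have h2 : ‖w‖⁻¹ * (⟪B z, w⟫ + ⟪b, w⟫) = 0 := by linarith
    rcases mul_eq_zero.mp h2 with h3 | h3
    · exact absurd h3 hc
    · exact h3


lemma eq_of_sq_eq' {a b : ℝ} (ha : 0 ≤ a) (hb : 0 ≤ b) (h : a^2 = b^2) : a = b := by
  have h2 : (a - b) * (a + b) = 0 := by ring_nf; nlinarith
  rcases mul_eq_zero.mp h2 with h3 | h3
  · linarith
  · linarith

lemma eigen (B : V →ₗ[ℝ] V) (hB : ∀ x y : V, ⟪B x, y⟫ = ⟪x, B y⟫) (b : V)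
    (hpos : ∀ x : V, ‖x‖ = 1 → 0 ≤ ⟪B x, x⟫ + 2 * ⟪b, x⟫)
    {z : V} (hz : ‖z‖ = 1) (hz0 : ⟪B z, z⟫ + 2 * ⟪b, z⟫ = 0) :
    B z + b = ⟪B z + b, z⟫ • z := by
  set v := B z + b with hv
  have hzz : ⟪z, z⟫ = 1 := by
    rw [real_inner_self_eq_norm_sq, hz]; norm_num
  have hw : ⟪z, v - ⟪v, z⟫ • z⟫ = 0 := by
    rw [inner_sub_right, real_inner_smul_right, hzz, mul_one, real_inner_comm z v, sub_self]
  have h0 := lagrange B hB b hpos hz hz0 hw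
  rw [← hv] at h0
  have hww : ⟪v - ⟪v, z⟫ • z, v - ⟪v, z⟫ • z⟫ = 0 := by
    rw [inner_sub_left, h0, real_inner_smul_left, hw, mul_zero, sub_self]
  have : v - ⟪v, z⟫ • z = 0 := inner_self_eq_zero.mp hww
  have := sub_eq_zero.mp this
  exact this

end aux


local notation "V3" => EuclideanSpace ℝ (Fin 3)

/-- The intersection of the unit sphere `S` of `ℝ³` with an ellipsoid `E` (image of `S`
under an invertible affine map) contained in the closed unit ball is either empty, a
single point, exactly two points, a circle, or the whole sphere `S`. -/
theorem sphere_inter_ellipsoid_classification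
    (f : EuclideanSpace ℝ (Fin 3) →ᵃ[ℝ] EuclideanSpace ℝ (Fin 3))
    (hf : Function.Bijective f)
    (E : Set (EuclideanSpace ℝ (Fin 3))) (hE : E = f '' Metric.sphere 0 1)
    (hEball : E ⊆ Metric.closedBall 0 1) :
    (Metric.sphere (0 : EuclideanSpace ℝ (Fin 3)) 1 ∩ E = ∅) ∨
    (∃ p, Metric.sphere (0 : EuclideanSpace ℝ (Fin 3)) 1 ∩ E = {p}) ∨
    (∃ p q, p ≠ q ∧ Metric.sphere (0 : EuclideanSpace ℝ (Fin 3)) 1 ∩ E = {p, q}) ∨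
    (∃ (c : EuclideanSpace ℝ (Fin 3)) (r : ℝ) (P : AffineSubspace ℝ (EuclideanSpace ℝ (Fin 3))),
        0 < r ∧ Module.finrank ℝ P.direction = 2 ∧
        Metric.sphere (0 : EuclideanSpace ℝ (Fin 3)) 1 ∩ E =
          (P : Set (EuclideanSpace ℝ (Fin 3))) ∩ Metric.sphere c r) ∨
    (Metric.sphere (0 : EuclideanSpace ℝ (Fin 3)) 1 ∩ E =
        Metric.sphere (0 : EuclideanSpace ℝ (Fin 3)) 1) := by
  classical
  have hbl : Function.Bijective f.linear := f.linear_bijective_iff.mpr hf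
  set L : V3 ≃ₗ[ℝ] V3 := LinearEquiv.ofBijective f.linear hbl with hL
  set T : V3 →ₗ[ℝ] V3 := (L.symm : V3 →ₗ[ℝ] V3) with hT
  set v : V3 := f 0 with hv
  have hfx : ∀ x, f x = f.linear x + v := by
    intro x
    have := f.map_vadd (0 : V3) x
    simpa [vadd_eq_add] using this
  have hTf : ∀ y : V3, T (f.linear y) = y := fun y => L.symm_apply_apply y
  have hfT : ∀ u : V3, f.linear (T u) = u := fun u => L.apply_symm_apply u
  have hmemE : ∀ x, x ∈ E ↔ ‖T (x - v)‖ = 1 := by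
    intro x
    rw [hE]
    constructor
    · rintro ⟨y, hy, rfl⟩
      have hy1 : ‖y‖ = 1 := by simpa using hy
      have h2 : T (f y - v) = y := by rw [hfx y]; simp [hTf]
      rw [h2, hy1]
    · intro h
      refine ⟨T (x - v), by simpa using h, ?_⟩
      rw [hfx]; rw [hfT]; abel
  -- quadratic form
  set Tadj : V3 →ₗ[ℝ] V3 := LinearMap.adjoint T with hTadj
  set γ : ℝ := ‖T v‖^2 - 1 with hγ
  set B : V3 →ₗ[ℝ] V3 := (Tadj ∘ₗ T) + γ • LinearMap.id with hBdef
  set b : V3 := - Tadj (T v) with hb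
  have hBq : ∀ x y : V3, ⟪B x, y⟫ = ⟪T x, T y⟫ + γ * ⟪x, y⟫ := by
    intro x y
    rw [hBdef]
    simp only [LinearMap.add_apply, LinearMap.comp_apply, LinearMap.smul_apply,
      LinearMap.id_apply, inner_add_left, real_inner_smul_left]
    rw [hTadj, LinearMap.adjoint_inner_left]
  have hB : ∀ x y : V3, ⟪B x, y⟫ = ⟪x, B y⟫ := by
    intro x y
    rw [hBq x y, real_inner_comm (B y) x, hBq y x, real_inner_comm (T x) (T y),
      real_inner_comm x y]
  have hbx : ∀ x : V3, ⟪b, x⟫ = - ⟪T v, T x⟫ := by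
    intro x
    rw [hb, inner_neg_left, hTadj, LinearMap.adjoint_inner_left]
  set q : V3 → ℝ := fun x => ⟪B x, x⟫ + 2 * ⟪b, x⟫ with hqdef
  have hq_on : ∀ x : V3, ‖x‖ = 1 → q x = ‖T (x - v)‖^2 - 1 := by
    intro x hx
    have hxx : ⟪x, x⟫ = 1 := by rw [real_inner_self_eq_norm_sq, hx]; norm_num
    have h1 : ‖T (x - v)‖^2 = ⟪T x, T x⟫ - ⟪T x, T v⟫ - ⟪T v, T x⟫ + ⟪T v, T v⟫ := by
      rw [← real_inner_self_eq_norm_sq, map_sub, inner_sub_sub_self]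
    have hcomm : ⟪T x, T v⟫ = ⟪T v, T x⟫ := real_inner_comm (T v) (T x)
    have hTvv : ⟪T v, T v⟫ = ‖T v‖^2 := real_inner_self_eq_norm_sq _
    simp only [hqdef]
    rw [hBq, hbx, hxx, h1, hγ]
    linarith
  have hZq : ∀ x : V3, ‖x‖ = 1 → (x ∈ E ↔ q x = 0) := by
    intro x hx
    rw [hmemE, hq_on x hx]
    constructor
    · intro h; rw [h]; norm_num
    · intro h
      apply norm_eq_one_of_sq
      linarith
  -- nonnegativity of q on the sphere
  have hpos : ∀ x : V3, ‖x‖ = 1 → 0 ≤ q x := by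
    intro x hx
    by_contra hneg
    push_neg at hneg
    have hlt : ‖T (x - v)‖^2 < 1 := by
      have := hq_on x hx; linarith
    have hTc : Continuous T := T.continuous_of_finiteDimensional
    set g : ℝ → ℝ := fun t => ‖T (t • x - v)‖^2 with hg
    have hgc : Continuous g := by
      apply Continuous.pow
      apply Continuous.norm
      exact hTc.comp ((continuous_id.smul continuous_const).sub continuous_const)
    have hx0 : x ≠ 0 := by intro h; rw [h] at hx; simp at hx
    have hTx0 : (0:ℝ) < ‖T x‖ := by
      rw [norm_pos_iff]
      intro h
      apply hx0
      have h2 := hfT x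
      rw [h] at h2
      simpa using h2.symm
    set t₀ : ℝ := max 2 ((1 + ‖T v‖)/‖T x‖) with ht₀
    have ht₀2 : (2:ℝ) ≤ t₀ := le_max_left _ _
    have ht₀1 : (1:ℝ) ≤ t₀ := by linarith
    have hgt₀ : 1 ≤ g t₀ := by
      have hb1 : (1 + ‖T v‖)/‖T x‖ ≤ t₀ := le_max_right _ _
      have hb2 : 1 + ‖T v‖ ≤ t₀ * ‖T x‖ := by
        rw [div_le_iff₀ hTx0] at hb1; linarith
      have hb3 : ‖T (t₀ • x)‖ - ‖T v‖ ≤ ‖T (t₀ • x) - T v‖ := norm_sub_norm_le _ _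
      have hb4 : ‖T (t₀ • x)‖ = t₀ * ‖T x‖ := by
        rw [map_smul, norm_smul, Real.norm_eq_abs, abs_of_pos (by linarith : (0:ℝ) < t₀)]
      have hb5 : T (t₀ • x) - T v = T (t₀ • x - v) := (map_sub T _ _).symm
      have hb6 : 1 ≤ ‖T (t₀ • x - v)‖ := by
        rw [← hb5]; rw [hb4] at hb3; linarith
      have hb7 : g t₀ = ‖T (t₀ • x - v)‖^2 := rfl
      nlinarith [hb6]
    have hg1 : g 1 < 1 := by
      have : g 1 = ‖T (x - v)‖^2 := by rw [hg]; simp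
      rw [this]; exact hlt
    obtain ⟨t, htmem, hgt⟩ : ∃ t ∈ Set.Icc (1:ℝ) t₀, g t = 1 := by
      have hiv := intermediate_value_Icc ht₀1 hgc.continuousOn
      have h1mem : (1:ℝ) ∈ Set.Icc (g 1) (g t₀) := ⟨le_of_lt hg1, hgt₀⟩
      obtain ⟨t, ht, hgt⟩ := hiv h1mem
      exact ⟨t, ht, hgt⟩
    have ht1 : 1 < t := by
      rcases lt_or_eq_of_le htmem.1 with h | h
      · exact h
      · exfalso; rw [← h] at hgt; rw [hgt] at hg1; exact lt_irrefl 1 hg1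
    have hyE : (t • x) ∈ E := by
      rw [hmemE]
      exact norm_eq_one_of_sq hgt
    have hmem := hEball hyE
    rw [Metric.mem_closedBall, dist_zero_right] at hmem
    rw [norm_smul, Real.norm_eq_abs, abs_of_pos (by linarith : (0:ℝ) < t), hx, mul_one] at hmem
    linarith
  have hq_eq : ∀ x : V3, q x = ⟪B x, x⟫ + 2 * ⟪b, x⟫ := fun x => rfl
  have hZchar : ∀ x : V3, x ∈ Metric.sphere (0:V3) 1 ∩ E ↔ (‖x‖ = 1 ∧ q x = 0) := by
    intro x
    rw [Set.mem_inter_iff, mem_sphere_zero_iff_norm]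
    constructor
    · rintro ⟨h1, h2⟩; exact ⟨h1, (hZq x h1).mp h2⟩
    · rintro ⟨h1, h2⟩; exact ⟨h1, (hZq x h1).mpr h2⟩
  rcases Set.eq_empty_or_nonempty (Metric.sphere (0:V3) 1 ∩ E) with hempty | ⟨z₀, hz₀⟩
  · exact Or.inl hempty
  obtain ⟨hz₀n, hz₀q⟩ := (hZchar z₀).mp hz₀
  have hpos' : ∀ x : V3, ‖x‖ = 1 → 0 ≤ ⟪B x, x⟫ + 2 * ⟪b, x⟫ := by
    intro x hx; rw [← hq_eq]; exact hpos x hx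
  have heig : ∀ z : V3, ‖z‖ = 1 → q z = 0 → B z + b = ⟪B z + b, z⟫ • z := by
    intro z hz hq0
    rw [hq_eq] at hq0
    exact eigen B hB b hpos' hz hq0
  have hbz : ∀ z : V3, ‖z‖ = 1 → q z = 0 → ⟪b, z⟫ = - ⟪B z + b, z⟫ := by
    intro z hz hq0
    rw [hq_eq] at hq0
    rw [inner_add_left]
    linarith
  set μ : ℝ := ⟪B z₀ + b, z₀⟫ with hμ
  have hmueq : ∀ z : V3, ‖z‖ = 1 → q z = 0 → ⟪B z + b, z⟫ = μ := by
    intro z hz hq0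
    by_cases hzz : z = z₀
    · rw [hzz]
    · set μ₁ := ⟪B z + b, z⟫ with hμ₁
      set t := ⟪z, z₀⟫ with ht
      have ht1 : t ≠ 1 := by
        intro hcon
        have hns : ‖z - z₀‖^2 = 2 - 2*t := by
          rw [norm_sub_sq_real, hz, hz₀n, ← ht]; ring
        have hns0 : ‖z - z₀‖^2 = 0 := by rw [hns, hcon]; ring
        have : z - z₀ = 0 := by
          rw [← norm_eq_zero]
          exact (pow_eq_zero_iff two_ne_zero).mp hns0
        exact hzz (sub_eq_zero.mp this)
      have h1 : B z = μ₁ • z - b := eq_sub_of_add_eq (heig z hz hq0)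
      have h2 : B z₀ = μ • z₀ - b := eq_sub_of_add_eq (heig z₀ hz₀n hz₀q)
      have hbz1 : ⟪b, z⟫ = -μ₁ := by rw [hbz z hz hq0]
      have hbz0 : ⟪b, z₀⟫ = -μ := by rw [hbz z₀ hz₀n hz₀q]
      have e1 : ⟪B z, z₀⟫ = μ₁ * t + μ := by
        rw [h1, inner_sub_left, real_inner_smul_left, ← ht, hbz0]; ring
      have e4 : ⟪z₀, z⟫ = t := by rw [ht]; exact real_inner_comm z z₀
      have e2 : ⟪B z₀, z⟫ = μ * t + μ₁ := by
        rw [h2, inner_sub_left, real_inner_smul_left, e4, hbz1]; ring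
      have e3 : ⟪B z, z₀⟫ = ⟪B z₀, z⟫ := by
        rw [hB z z₀]
        exact (real_inner_comm z (B z₀)).symm
      have hprod : (μ₁ - μ) * (t - 1) = 0 := by
        rw [e1, e2] at e3
        linear_combination e3
      rcases mul_eq_zero.mp hprod with hh | hh
      · linarith
      · exact absurd (by linarith : t = 1) ht1
  have hBzero : ∀ z : V3, ‖z‖ = 1 → q z = 0 → B z = μ • z - b := by
    intro z hz hq0
    have h1 := heig z hz hq0
    rw [hmueq z hz hq0] at h1
    exact eq_sub_of_add_eq h1
  set K : Submodule ℝ V3 := LinearMap.ker (B - μ • LinearMap.id) with hK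
  have hKmem : ∀ u : V3, u ∈ K ↔ B u = μ • u := by
    intro u
    rw [hK, LinearMap.mem_ker, LinearMap.sub_apply, LinearMap.smul_apply, LinearMap.id_apply,
      sub_eq_zero]
  have hZ2 : ∀ x : V3, x ∈ Metric.sphere (0:V3) 1 ∩ E ↔ (x - z₀ ∈ K ∧ ‖x‖ = 1) := by
    intro x
    rw [hZchar]
    constructor
    · rintro ⟨h1, h2⟩
      refine ⟨?_, h1⟩
      rw [hKmem, map_sub, hBzero x h1 h2, hBzero z₀ hz₀n hz₀q, smul_sub]
      abel
    · rintro ⟨hk, hx⟩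
      refine ⟨hx, ?_⟩
      have hBk : B (x - z₀) = μ • (x - z₀) := (hKmem _).mp hk
      have hBx : B x = μ • x - b := by
        have h1 : B x = B z₀ + B (x - z₀) := by rw [← map_add]; congr 1; abel
        rw [h1, hBzero z₀ hz₀n hz₀q, hBk, smul_sub]; abel
      have hxx : ⟪x, x⟫ = 1 := by
        rw [real_inner_self_eq_norm_sq, hx]; norm_num
      have hbz0 : ⟪b, z₀⟫ = -μ := by rw [hbz z₀ hz₀n hz₀q]
      have hbk : ⟪b, x - z₀⟫ = 0 := by
        have hbe : b = μ • z₀ - B z₀ := by rw [hBzero z₀ hz₀n hz₀q]; abel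
        rw [hbe, inner_sub_left, real_inner_smul_left, hB z₀ (x - z₀), hBk,
          real_inner_smul_right]
        ring
      have hbxx : ⟪b, x⟫ = -μ := by
        have h1 : ⟪b, x⟫ = ⟪b, z₀⟫ + ⟪b, x - z₀⟫ := by
          rw [← inner_add_right]; congr 1; abel
        rw [h1, hbz0, hbk]; ring
      rw [hq_eq, hBx, inner_sub_left, real_inner_smul_left, hxx, hbxx]
      ring
  clear hKmem hK hZchar hZq hq_on hpos hpos' heig hbz hmueq hBzero hBq hB hbx hmemE hfx hTf
    hfT hq_eq hz₀q
  clear_value K μ q b B γ Tadj v T L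
  clear hγ hμ hTadj hBdef hb hqdef hL hT hv hbl μ q b B γ Tadj v T L
  by_cases hone : Metric.sphere (0:V3) 1 ∩ E ⊆ {z₀}
  · right; left
    exact ⟨z₀, Set.Subset.antisymm hone (Set.singleton_subset_iff.mpr hz₀)⟩
  obtain ⟨z₁, hz₁, hz₁ne⟩ : ∃ z₁ ∈ Metric.sphere (0:V3) 1 ∩ E, z₁ ≠ z₀ := by
    rcases Set.not_subset.mp hone with ⟨z₁, hh1, hh2⟩
    exact ⟨z₁, hh1, by simpa using hh2⟩
  obtain ⟨hz₁k, hz₁n⟩ := (hZ2 z₁).mp hz₁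
  have hdim : Module.finrank ℝ K ≤ 3 := by
    have h1 := Submodule.finrank_le K
    rwa [finrank_euclideanSpace_fin] at h1
  have hcases : Module.finrank ℝ K = 0 ∨ Module.finrank ℝ K = 1 ∨ Module.finrank ℝ K = 2
      ∨ Module.finrank ℝ K = 3 := by omega
  rcases hcases with h | h | h | h
  · exfalso
    have hKbot : K = ⊥ := Submodule.finrank_eq_zero.mp h
    rw [hKbot, Submodule.mem_bot] at hz₁k
    exact hz₁ne (by rwa [sub_eq_zero] at hz₁k)
  · -- dimension 1 : two points
    right; right; left
    obtain ⟨k, hk0, hkspan⟩ := finrank_eq_one_iff'.mp h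
    set kv : V3 := (k : V3) with hkv
    have hkv0 : kv ≠ 0 := fun hh => hk0 (Subtype.ext hh)
    obtain ⟨t₁, ht₁⟩ : ∃ t₁ : ℝ, t₁ • kv = z₁ - z₀ := by
      obtain ⟨cc, hcc⟩ := hkspan ⟨z₁ - z₀, hz₁k⟩
      exact ⟨cc, congrArg Subtype.val hcc⟩
    have ht₁0 : t₁ ≠ 0 := by
      intro hh
      rw [hh, zero_smul] at ht₁
      exact hz₁ne (by rw [← sub_eq_zero]; exact ht₁.symm)
    have hexp : ∀ cc : ℝ, ‖z₀ + cc • kv‖^2 = 1 + 2*cc*⟪z₀, kv⟫ + cc^2*‖kv‖^2 := by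
      intro cc
      rw [norm_add_sq_real, real_inner_smul_right, norm_smul, hz₀n, Real.norm_eq_abs,
        mul_pow, sq_abs]
      ring
    have hz₁eq : z₁ = z₀ + t₁ • kv := by rw [ht₁]; abel
    have ht₁rel : 2*⟪z₀, kv⟫ + t₁*‖kv‖^2 = 0 := by
      have h1 : ‖z₀ + t₁ • kv‖^2 = 1 := by rw [← hz₁eq, hz₁n]; norm_num
      rw [hexp t₁] at h1
      have h2 : t₁ * (2*⟪z₀, kv⟫ + t₁*‖kv‖^2) = 0 := by linear_combination h1
      rcases mul_eq_zero.mp h2 with hh | hh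
      · exact absurd hh ht₁0
      · exact hh
    refine ⟨z₀, z₁, Ne.symm hz₁ne, ?_⟩
    ext x
    simp only [Set.mem_insert_iff, Set.mem_singleton_iff]
    constructor
    · intro hx
      obtain ⟨hxk, hxn⟩ := (hZ2 x).mp hx
      obtain ⟨cc, hcc⟩ := hkspan ⟨x - z₀, hxk⟩
      have hc' : cc • kv = x - z₀ := congrArg Subtype.val hcc
      have hxeq : x = z₀ + cc • kv := by rw [hc']; abel
      have h1 : ‖z₀ + cc • kv‖^2 = 1 := by rw [← hxeq, hxn]; norm_num
      rw [hexp cc] at h1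
      have h2 : cc * (2*⟪z₀, kv⟫ + cc*‖kv‖^2) = 0 := by linear_combination h1
      rcases mul_eq_zero.mp h2 with hh | hh
      · left; rw [hxeq, hh, zero_smul, add_zero]
      · right
        have hkv2 : ‖kv‖^2 ≠ 0 := pow_ne_zero 2 (norm_ne_zero_iff.mpr hkv0)
        have hct : cc = t₁ := by
          have h3 : cc * ‖kv‖^2 = t₁ * ‖kv‖^2 := by linarith
          exact mul_right_cancel₀ hkv2 h3
        rw [hxeq, hct, ← hz₁eq]
    · intro hx
      rcases hx with rfl | rfl
      · exact hz₀
      · exact hz₁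
  · -- dimension 2 : circle
    right; right; right; left
    set c : V3 := z₀ - (K.orthogonalProjectionOnto z₀ : V3) with hc
    have hcK : c ∈ Kᗮ := Submodule.sub_starProjection_mem_orthogonal (K := K) z₀
    have hz₀c : z₀ - c ∈ K := by
      have h1 : z₀ - c = (K.orthogonalProjectionOnto z₀ : V3) := by rw [hc]; abel
      rw [h1]; exact Submodule.coe_mem _
    have hpyth : ∀ x : V3, x - z₀ ∈ K → ‖x‖^2 = ‖x - c‖^2 + ‖c‖^2 := by
      intro x hx
      have hxc : x - c ∈ K := by
        have h1 : x - c = (x - z₀) + (z₀ - c) := by abel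
        rw [h1]; exact K.add_mem hx hz₀c
      have hinner : ⟪x - c, c⟫ = 0 := (Submodule.mem_orthogonal K c).mp hcK (x - c) hxc
      have h2 : x = (x - c) + c := by abel
      calc ‖x‖^2 = ‖(x - c) + c‖^2 := by rw [← h2]
        _ = ‖x - c‖^2 + 2*⟪x - c, c⟫ + ‖c‖^2 := by rw [norm_add_sq_real]
        _ = ‖x - c‖^2 + ‖c‖^2 := by rw [hinner]; ring
    set r : ℝ := ‖z₀ - c‖ with hr
    have hr2 : r^2 + ‖c‖^2 = 1 := by
      have h1 := hpyth z₀ (by rw [sub_self]; exact K.zero_mem)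
      rw [hz₀n] at h1
      rw [hr]
      nlinarith [h1]
    have hr0 : 0 < r := by
      rcases lt_or_eq_of_le (norm_nonneg (z₀ - c)) with hh | hh
      · exact hh
      · exfalso
        have hre : r = 0 := hh.symm
        have hz₀c0 : z₀ = c := by
          rw [← sub_eq_zero, ← norm_eq_zero, ← hr]
          exact hre
        have h1 := hpyth z₁ hz₁k
        rw [hz₁n] at h1
        have h2 : ‖z₁ - c‖^2 = 0 := by nlinarith [hr2, hre]
        have h3 : z₁ = c := by
          rw [← sub_eq_zero, ← norm_eq_zero]
          exact (pow_eq_zero_iff two_ne_zero).mp h2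
        exact hz₁ne (by rw [h3, ← hz₀c0])
    refine ⟨c, r, AffineSubspace.mk' z₀ K, hr0, ?_, ?_⟩
    · rw [AffineSubspace.direction_mk']; exact h
    · ext x
      have hmk : x ∈ AffineSubspace.mk' z₀ K ↔ x - z₀ ∈ K := by
        rw [AffineSubspace.mem_mk', vsub_eq_sub]
      constructor
      · intro hx
        obtain ⟨hxk, hxn⟩ := (hZ2 x).mp hx
        have hpx := hpyth x hxk
        rw [hxn] at hpx
        refine Set.mem_inter (by rw [AffineSubspace.mem_coe]; exact hmk.mpr hxk) ?_
        rw [mem_sphere_iff_norm]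
        apply eq_of_sq_eq' (norm_nonneg _) (le_of_lt hr0)
        nlinarith [hpx, hr2]
      · intro hx
        obtain ⟨hxP, hxs⟩ := hx
        rw [mem_sphere_iff_norm] at hxs
        rw [AffineSubspace.mem_coe] at hxP
        have hxk := hmk.mp hxP
        have hpx := hpyth x hxk
        have hxn : ‖x‖ = 1 := norm_eq_one_of_sq (by rw [hpx, hxs]; linarith [hr2])
        exact (hZ2 x).mpr ⟨hxk, hxn⟩
  · -- dimension 3 : whole sphere
    right; right; right; right
    have hKtop : K = ⊤ := Submodule.eq_top_of_finrank_eq (by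
      rw [h, finrank_euclideanSpace_fin])
    apply Set.Subset.antisymm Set.inter_subset_left
    intro x hx
    have hx1 : ‖x‖ = 1 := by rwa [mem_sphere_zero_iff_norm] at hx
    exact (hZ2 x).mpr ⟨by rw [hKtop]; trivial, hx1⟩
end

section
/- Suppose an ellipsoid E with semi-axes a, a, c (rotationally symmetric about the z-axis, with 0 < c < a² < 1), translated by t₃ = √((1−a²)(a²−c²))/a along the z-axis, touches the unit sphere in a circle of positive radius. Then the parameters (λ₁,λ₂,λ₃) = (±a,±a,±c) with translation (0,0,t₃) violate the complete-positivity condition t₃² ≤ (c ± 1)² − 4a²; specifically (c ± 1)² − 4a² − t₃² = (c² ± 2ca² − 3a⁴)/a² ≤ 0 for c < a², with equality only in degenerate cases. -/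
/-- A rotationally symmetric ellipsoid with semi-axes `a, a, c` (`0 < c < a² < 1`),
displaced by `t₃ = √((1-a²)(a²-c²))/a` along its symmetry axis so as to touch the unit
sphere in a circle of positive radius, violates the complete-positivity condition
`t₃² ≤ (c ± 1)² - 4a²`: indeed `(c ± 1)² - 4a² - t₃² = (c² ± 2ca² - 3a⁴)/a² ≤ 0`. -/
theorem no_circle_pure_output_core (a c : ℝ)
    (hc : 0 < c) (hca : c < a ^ 2) (ha : a ^ 2 < 1)
    (t₃ : ℝ) (ht : t₃ = Real.sqrt ((1 - a ^ 2) * (a ^ 2 - c ^ 2)) / a) :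
    ((c + 1) ^ 2 - 4 * a ^ 2 - t₃ ^ 2 = (c ^ 2 + 2 * c * a ^ 2 - 3 * a ^ 4) / a ^ 2 ∧
      (c + 1) ^ 2 - 4 * a ^ 2 - t₃ ^ 2 ≤ 0) ∧
    ((c - 1) ^ 2 - 4 * a ^ 2 - t₃ ^ 2 = (c ^ 2 - 2 * c * a ^ 2 - 3 * a ^ 4) / a ^ 2 ∧
      (c - 1) ^ 2 - 4 * a ^ 2 - t₃ ^ 2 ≤ 0) := by
  have ha2 : 0 < a ^ 2 := hc.trans hca
  have ha0 : a ≠ 0 := by intro h; simp [h] at ha2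
  have hc1 : c < 1 := hca.trans ha
  have hX : 0 ≤ (1 - a ^ 2) * (a ^ 2 - c ^ 2) := mul_nonneg (by linarith) (by nlinarith)
  have ht2 : t₃ ^ 2 = (1 - a ^ 2) * (a ^ 2 - c ^ 2) / a ^ 2 := by
    rw [ht, div_pow, Real.sq_sqrt hX]
  have e1 : (c + 1) ^ 2 - 4 * a ^ 2 - t₃ ^ 2
      = (c ^ 2 + 2 * c * a ^ 2 - 3 * a ^ 4) / a ^ 2 := by
    rw [ht2]; field_simp; ring
  have e2 : (c - 1) ^ 2 - 4 * a ^ 2 - t₃ ^ 2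
      = (c ^ 2 - 2 * c * a ^ 2 - 3 * a ^ 4) / a ^ 2 := by
    rw [ht2]; field_simp; ring
  refine ⟨⟨e1, ?_⟩, ⟨e2, ?_⟩⟩
  · rw [e1]
    apply div_nonpos_of_nonpos_of_nonneg _ ha2.le
    nlinarith
  · rw [e2]
    apply div_nonpos_of_nonpos_of_nonneg _ ha2.le
    nlinarith
end
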